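/- arXiv:1303.5350 — 7 statements merged into one kernel-verified Lean document; each statement's English description precedes it below -/
import Mathlib

section
/- Let z : ZMod (2t) → ℤ satisfy |z(k+1) - z(k)| = 1 for all k and z(k+t) = t - z(k) for all k. Then the number of local minima of z (indices k with z(k-1) > z(k) and z(k+1) > z(k)) equals t - (1/4)·∑ₖ |z(k+1) - z(k-1)|. -/
/-- Number of local minima of a `2t`-periodic integer sequence. -/
def minimaCount (t : ℕ) (z : ZMod (2*t) → ℤ) : ℕ :=
  ((Finset.range (2*t)).filter (fun k : ℕ =>
    z ((k : ZMod (2*t)) - 1) > z (k : ZMod (2*t)) ∧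
    z ((k : ZMod (2*t)) + 1) > z (k : ZMod (2*t)))).card

private lemma card_filter_range_zmod {n : ℕ} [NeZero n] (p : ZMod n → Prop) [DecidablePred p] :
    ((Finset.range n).filter (fun k : ℕ => p (k : ZMod n))).card
      = (Finset.univ.filter p).card := by
  refine Finset.card_nbij' (fun k => (k : ZMod n)) (fun x => x.val) ?_ ?_ ?_ ?_
  · intro a ha
    simp only [Finset.mem_coe, Finset.mem_filter, Finset.mem_range] at ha ⊢
    exact ⟨Finset.mem_univ _, ha.2⟩
  · intro x hx
    simp only [Finset.mem_coe, Finset.mem_filter, Finset.mem_range] at hx ⊢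
    rw [ZMod.natCast_rightInverse x]
    exact ⟨ZMod.val_lt x, hx.2⟩
  · intro a ha
    simp only [Finset.mem_coe, Finset.mem_filter, Finset.mem_range] at ha
    exact ZMod.val_cast_of_lt ha.1
  · intro x _
    exact ZMod.natCast_rightInverse x

private lemma sum_range_zmod {n : ℕ} [NeZero n] (f : ZMod n → ℝ) :
    ∑ k ∈ Finset.range n, f (k : ZMod n) = ∑ x : ZMod n, f x := by
  refine Finset.sum_nbij' (fun k => (k : ZMod n)) (fun x => x.val) ?_ ?_ ?_ ?_ ?_
  · intro a _; exact Finset.mem_univ _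
  · intro x _; exact Finset.mem_range.mpr (ZMod.val_lt x)
  · intro a ha; exact ZMod.val_cast_of_lt (Finset.mem_range.mp ha)
  · intro x _; exact ZMod.natCast_rightInverse x
  · intro a _; rfl

theorem minima_eq_abs_diff (t : ℕ) (ht : 2 ≤ t) (z : ZMod (2*t) → ℤ)
    (hstep : ∀ k : ZMod (2*t), |z (k + 1) - z k| = 1)
    (hant : ∀ k : ZMod (2*t), z (k + (t : ZMod (2*t))) = (t : ℤ) - z k) :
    (minimaCount t z : ℝ) =
      (t : ℝ) - (1/4) * ∑ k ∈ Finset.range (2*t),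
        |(z ((k : ZMod (2*t)) + 1) : ℝ) - (z ((k : ZMod (2*t)) - 1) : ℝ)| := by
  classical
  haveI : NeZero (2*t) := ⟨by omega⟩
  set P : ZMod (2*t) → Prop := fun x => z (x - 1) > z x ∧ z (x + 1) > z x with hP
  set Q : ZMod (2*t) → Prop := fun x => z (x - 1) < z x ∧ z (x + 1) < z x with hQ
  have hsign : ∀ k : ZMod (2*t), z (k+1) - z k = 1 ∨ z (k+1) - z k = -1 := by
    intro k
    have h := hstep k
    rcases (abs_eq (by norm_num : (0:ℤ) ≤ 1)).mp h with h' | h'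
    · exact Or.inl h'
    · exact Or.inr h'
  -- pointwise identity
  have key : ∀ x : ZMod (2*t), |z (x+1) - z (x-1)| =
      2 - (if P x then 2 else 0) - (if Q x then 2 else 0) := by
    intro x
    have ha := hsign x
    have hb := hsign (x-1)
    rw [sub_add_cancel] at hb
    simp only [hP, hQ]
    rcases ha with ha | ha <;> rcases hb with hb | hb
    · rw [if_neg (by omega), if_neg (by omega)]
      have h2 : z (x+1) - z (x-1) = 2 := by omega
      rw [h2]; norm_num
    · rw [if_pos (by constructor <;> omega), if_neg (by omega)]
      have h2 : z (x+1) - z (x-1) = 0 := by omega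
      rw [h2]; norm_num
    · rw [if_neg (by omega), if_pos (by constructor <;> omega)]
      have h2 : z (x+1) - z (x-1) = 0 := by omega
      rw [h2]; norm_num
    · rw [if_neg (by omega), if_neg (by omega)]
      have h2 : z (x+1) - z (x-1) = -2 := by omega
      rw [h2]; norm_num
  set m : ℕ := (Finset.univ.filter P).card with hm
  set M : ℕ := (Finset.univ.filter Q).card with hM
  have htt : (t : ZMod (2*t)) + (t : ZMod (2*t)) = 0 := by
    have : ((2*t : ℕ) : ZMod (2*t)) = 0 := ZMod.natCast_self _
    push_cast at this
    linear_combination this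
  have hPQ : ∀ x : ZMod (2*t), P x → Q (x + (t : ZMod (2*t))) := by
    intro x hx
    obtain ⟨h1, h2⟩ := hx
    have e1 : x + (t : ZMod (2*t)) - 1 = (x - 1) + (t : ZMod (2*t)) := by ring
    have e2 : x + (t : ZMod (2*t)) + 1 = (x + 1) + (t : ZMod (2*t)) := by ring
    constructor
    · rw [e1, hant, hant]; omega
    · rw [e2, hant, hant]; omega
  have hQP : ∀ x : ZMod (2*t), Q x → P (x + (t : ZMod (2*t))) := by
    intro x hx
    obtain ⟨h1, h2⟩ := hx
    have e1 : x + (t : ZMod (2*t)) - 1 = (x - 1) + (t : ZMod (2*t)) := by ring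
    have e2 : x + (t : ZMod (2*t)) + 1 = (x + 1) + (t : ZMod (2*t)) := by ring
    constructor
    · rw [e1, hant, hant]; omega
    · rw [e2, hant, hant]; omega
  have hmM : m = M := by
    refine Finset.card_nbij' (fun x => x + (t : ZMod (2*t))) (fun x => x + (t : ZMod (2*t)))
      ?_ ?_ ?_ ?_
    · intro a ha
      simp only [Finset.mem_coe, Finset.mem_filter, Finset.mem_univ, true_and] at ha ⊢
      exact hPQ a ha
    · intro a ha
      simp only [Finset.mem_coe, Finset.mem_filter, Finset.mem_univ, true_and] at ha ⊢
      exact hQP a ha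
    · intro a _; show a + _ + _ = a; rw [add_assoc, htt, add_zero]
    · intro a _; show a + _ + _ = a; rw [add_assoc, htt, add_zero]
  -- integer sum
  have hsumZ : ∑ x : ZMod (2*t), |z (x+1) - z (x-1)|
      = 2 * (2*t : ℤ) - 2 * m - 2 * M := by
    rw [Finset.sum_congr rfl (fun x _ => key x)]
    rw [Finset.sum_sub_distrib, Finset.sum_sub_distrib, Finset.sum_const]
    have c1 : ∑ x : ZMod (2*t), (if P x then (2:ℤ) else 0) = 2 * m := by
      rw [hm, ← Finset.sum_filter, Finset.sum_const]
      simp [mul_comm]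
    have c2 : ∑ x : ZMod (2*t), (if Q x then (2:ℤ) else 0) = 2 * M := by
      rw [hM, ← Finset.sum_filter, Finset.sum_const]
      simp [mul_comm]
    rw [c1, c2]
    have hcard : Fintype.card (ZMod (2*t)) = 2*t := ZMod.card _
    simp [hcard]
    ring
  have hmin : minimaCount t z = m := by
    rw [hm, minimaCount]
    exact card_filter_range_zmod P
  -- convert the real sum
  have hR : ∑ k ∈ Finset.range (2*t),
        |(z ((k : ZMod (2*t)) + 1) : ℝ) - (z ((k : ZMod (2*t)) - 1) : ℝ)|
      = ((∑ x : ZMod (2*t), |z (x+1) - z (x-1)| : ℤ) : ℝ) := by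
    push_cast
    exact sum_range_zmod (fun x => |(z (x+1) : ℝ) - (z (x-1) : ℝ)|)
  rw [hmin, hR, hsumZ, ← hmM]
  push_cast
  ring
end

section
/- Let z : ZMod (2t) → ℤ satisfy |z(k+1) - z(k)| = 1 and z(k+t) = t - z(k) for all k. Then the number of local minima of z equals t - (1/8)·∑ₖ (z(k+1) - z(k-1))². -/
lemma aux_sq (a b c : ℤ) (h1 : |b - a| = 1) (h2 : |c - b| = 1) :
    (c - a)^2 = 4 - 4 * (if a > b ∧ c > b then (1:ℤ) else 0)
                  - 4 * (if a < b ∧ c < b then (1:ℤ) else 0) := by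
  rcases (abs_eq (by norm_num : (0:ℤ) ≤ 1)).mp h1 with h1 | h1 <;>
  rcases (abs_eq (by norm_num : (0:ℤ) ≤ 1)).mp h2 with h2 | h2
  · have he : c - a = 2 := by omega
    rw [he]; split_ifs <;> first | (exfalso; omega) | norm_num
  · have he : c - a = 0 := by omega
    rw [he]; split_ifs <;> first | (exfalso; omega) | norm_num
  · have he : c - a = 0 := by omega
    rw [he]; split_ifs <;> first | (exfalso; omega) | norm_num
  · have he : c - a = -2 := by omega
    rw [he]; split_ifs <;> first | (exfalso; omega) | norm_num

theorem minima_eq_sq_diff (t : ℕ) (ht : 2 ≤ t) (z : ZMod (2*t) → ℤ)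
    (hstep : ∀ k : ZMod (2*t), |z (k + 1) - z k| = 1)
    (hant : ∀ k : ZMod (2*t), z (k + (t : ZMod (2*t))) = (t : ℤ) - z k) :
    (minimaCount t z : ℝ) =
      (t : ℝ) - (1/8) * ∑ k ∈ Finset.range (2*t),
        ((z ((k : ZMod (2*t)) + 1) : ℝ) - (z ((k : ZMod (2*t)) - 1) : ℝ))^2 := by
  haveI : NeZero (2*t) := ⟨by omega⟩
  -- reindexing sums over range (2*t) to sums over ZMod (2*t)
  have reindex : ∀ f : ZMod (2*t) → ℤ,
      ∑ k ∈ Finset.range (2*t), f (k : ZMod (2*t)) = ∑ k : ZMod (2*t), f k := by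
    intro f
    refine Finset.sum_nbij' (fun k => (k : ZMod (2*t))) (fun k => k.val)
      (fun a _ => Finset.mem_univ _) (fun a _ => Finset.mem_range.mpr (ZMod.val_lt a))
      (fun a ha => ZMod.val_natCast_of_lt (Finset.mem_range.mp ha))
      (fun a _ => ZMod.natCast_rightInverse a)
      (fun a _ => rfl)
  -- pointwise identity
  have key : ∀ k : ZMod (2*t),
      (z (k+1) - z (k-1))^2
        = 4 - 4 * (if z (k-1) > z k ∧ z (k+1) > z k then (1:ℤ) else 0)
            - 4 * (if z (k-1) < z k ∧ z (k+1) < z k then (1:ℤ) else 0) := by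
    intro k
    have h1 := hstep (k-1)
    rw [sub_add_cancel] at h1
    exact aux_sq (z (k-1)) (z k) (z (k+1)) h1 (hstep k)
  -- shift by t exchanges minima and maxima
  have hshift : ∀ k : ZMod (2*t), k + (t : ZMod (2*t)) + (t : ZMod (2*t)) = k := by
    intro k
    have : ((t : ZMod (2*t)) + (t : ZMod (2*t))) = 0 := by
      rw [← Nat.cast_add, ← two_mul]; exact ZMod.natCast_self _
    rw [add_assoc, this, add_zero]
  have hflip : ∀ k : ZMod (2*t),
      (z (k + (t:ZMod (2*t)) - 1) > z (k + (t:ZMod (2*t))) ∧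
        z (k + (t:ZMod (2*t)) + 1) > z (k + (t:ZMod (2*t)))) ↔
      (z (k - 1) < z k ∧ z (k + 1) < z k) := by
    intro k
    have e1 : z (k + (t:ZMod (2*t)) - 1) = (t:ℤ) - z (k - 1) := by
      have harg : k + (t:ZMod (2*t)) - 1 = (k - 1) + (t:ZMod (2*t)) := by ring
      rw [harg, hant]
    have e2 : z (k + (t:ZMod (2*t)) + 1) = (t:ℤ) - z (k + 1) := by
      have harg : k + (t:ZMod (2*t)) + 1 = (k + 1) + (t:ZMod (2*t)) := by ring
      rw [harg, hant]
    rw [e1, e2, hant]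
    constructor <;> rintro ⟨hA, hB⟩ <;> exact ⟨by omega, by omega⟩
  -- count of maxima equals count of minima
  have hmax : ∑ k : ZMod (2*t), (if z (k-1) < z k ∧ z (k+1) < z k then (1:ℤ) else 0)
      = ∑ k : ZMod (2*t), (if z (k-1) > z k ∧ z (k+1) > z k then (1:ℤ) else 0) := by
    refine Fintype.sum_equiv (Equiv.addRight (t : ZMod (2*t))) _ _ ?_
    intro k
    simp only [Equiv.coe_addRight]
    exact (if_congr (hflip k) rfl rfl).symm
  -- minimaCount as a sum
  have hM : (minimaCount t z : ℤ)
      = ∑ k : ZMod (2*t), (if z (k-1) > z k ∧ z (k+1) > z k then (1:ℤ) else 0) := by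
    rw [← reindex]
    rw [minimaCount, Finset.card_filter]
    push_cast
    rfl
  -- integer sum identity
  have hS : (∑ k ∈ Finset.range (2*t),
        (z ((k : ZMod (2*t)) + 1) - z ((k : ZMod (2*t)) - 1))^2)
      = 4 * (2*t : ℤ) - 8 * (minimaCount t z : ℤ) := by
    rw [reindex (fun k => (z (k + 1) - z (k - 1))^2)]
    calc ∑ k : ZMod (2*t), (z (k+1) - z (k-1))^2
        = ∑ k : ZMod (2*t),
            (4 - 4 * (if z (k-1) > z k ∧ z (k+1) > z k then (1:ℤ) else 0)
               - 4 * (if z (k-1) < z k ∧ z (k+1) < z k then (1:ℤ) else 0)) := by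
          exact Finset.sum_congr rfl (fun k _ => key k)
      _ = 4 * (2*t : ℤ) - 8 * (minimaCount t z : ℤ) := by
          rw [Finset.sum_sub_distrib, Finset.sum_sub_distrib, ← Finset.mul_sum,
            ← Finset.mul_sum, hmax, ← hM, Finset.sum_const, Finset.card_univ, ZMod.card]
          ring
  -- pass to the reals
  have hcast : ∑ k ∈ Finset.range (2*t),
        ((z ((k : ZMod (2*t)) + 1) : ℝ) - (z ((k : ZMod (2*t)) - 1) : ℝ))^2
      = ((∑ k ∈ Finset.range (2*t),
          (z ((k : ZMod (2*t)) + 1) - z ((k : ZMod (2*t)) - 1))^2 : ℤ) : ℝ) := by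
    push_cast
    rfl
  rw [hcast, hS]
  push_cast
  ring
end

section
/- Let z : ZMod (2t) → ℤ satisfy |z(k+1) - z(k)| = 1 and z(k+t) = t - z(k) for all k. Then the number of local minima of z equals t - (1/4)·∑ₖ (z(k)² - z(k-1)·z(k+1)). -/
lemma zmod_sum_range {n : ℕ} [NeZero n] (f : ZMod n → ℤ) :
    ∑ i ∈ Finset.range n, f (i : ZMod n) = ∑ k : ZMod n, f k := by
  apply Finset.sum_nbij' (fun i : ℕ => (i : ZMod n)) (fun k : ZMod n => k.val)
  · intro i _; exact Finset.mem_univ _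
  · intro k _; exact Finset.mem_range.2 (ZMod.val_lt k)
  · intro i hi; exact ZMod.val_cast_of_lt (Finset.mem_range.1 hi)
  · intro k _; exact ZMod.natCast_rightInverse k
  · intro i _; rfl

lemma zmod_card_filter {n : ℕ} [NeZero n] (p : ZMod n → Prop) [DecidablePred p] :
    ((Finset.range n).filter (fun i : ℕ => p (i : ZMod n))).card
      = (Finset.univ.filter p).card := by
  apply Finset.card_nbij' (fun i : ℕ => (i : ZMod n)) (fun k : ZMod n => k.val)
  · intro i hi; simp only [Finset.mem_filter, Finset.mem_range, Finset.mem_coe] at hi ⊢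
    exact ⟨Finset.mem_univ _, hi.2⟩
  · intro k hk; simp only [Finset.mem_filter, Finset.mem_range, Finset.mem_coe] at hk ⊢
    refine ⟨ZMod.val_lt k, ?_⟩
    rw [ZMod.natCast_rightInverse k]; exact hk.2
  · intro i hi; exact ZMod.val_cast_of_lt (Finset.mem_range.1 (Finset.mem_filter.1 hi).1)
  · intro k _; exact ZMod.natCast_rightInverse k

theorem minima_eq_sq_minus_prod (t : ℕ) (ht : 2 ≤ t) (z : ZMod (2*t) → ℤ)
    (hstep : ∀ k : ZMod (2*t), |z (k + 1) - z k| = 1)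
    (hant : ∀ k : ZMod (2*t), z (k + (t : ZMod (2*t))) = (t : ℤ) - z k) :
    (minimaCount t z : ℝ) =
      (t : ℝ) - (1/4) * ∑ k ∈ Finset.range (2*t),
        ((z (k : ZMod (2*t)) : ℝ)^2 -
          (z ((k : ZMod (2*t)) - 1) : ℝ) * (z ((k : ZMod (2*t)) + 1) : ℝ)) := by
  haveI : NeZero (2*t) := ⟨by omega⟩
  set d : ZMod (2*t) → ℤ := fun k => z (k+1) - z k with hdd
  have hd : ∀ k, d k = 1 ∨ d k = -1 := by
    intro k
    have h := hstep k
    rcases (abs_eq (by norm_num : (0:ℤ) ≤ 1)).1 h with h' | h'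
    · exact Or.inl h'
    · exact Or.inr h'
  have hsub : ∀ k : ZMod (2*t), (k - 1) + 1 = k := fun k => by ring
  have hza : ∀ k : ZMod (2*t), z (k-1) = z k - d (k-1) := by
    intro k; simp only [hdd]; rw [hsub k]; ring
  have hzb : ∀ k : ZMod (2*t), z (k+1) = z k + d k := by
    intro k; simp only [hdd]; ring
  -- shift lemma
  have shift : ∀ g : ZMod (2*t) → ℤ, ∑ k : ZMod (2*t), g (k+1) = ∑ k : ZMod (2*t), g k := by
    intro g
    exact Fintype.sum_equiv (Equiv.addRight (1 : ZMod (2*t))) _ _ (fun k => rfl)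
  have h1 : ∑ k : ZMod (2*t), z (k+1) * d k = ∑ k : ZMod (2*t), z k * d (k-1) := by
    rw [← shift (fun k => z k * d (k-1))]
    apply Finset.sum_congr rfl
    intro k _
    simp only [add_sub_cancel_right]
  have hdk : ∀ k, d k * d k = 1 := by
    intro k; rcases hd k with h | h <;> rw [h] <;> norm_num
  have hcardu : (Finset.univ : Finset (ZMod (2*t))).card = 2*t := by
    simp [ZMod.card]
  -- key1
  have key1 : ∑ k : ZMod (2*t), (z k^2 - z (k-1) * z (k+1))
      = (2*t : ℤ) + ∑ k : ZMod (2*t), d (k-1) * d k := by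
    have e1 : ∀ k : ZMod (2*t), z k^2 - z (k-1) * z (k+1)
        = (z (k+1) * d k - z k * d k) + (z k * d (k-1) - z (k+1) * d k) + d (k-1) * d k := by
      intro k
      rw [hza k, hzb k]; ring
    rw [Finset.sum_congr rfl (fun k _ => e1 k)]
    have e2 : ∑ k : ZMod (2*t), (z (k+1) * d k - z k * d k) = (2*t : ℤ) := by
      have h3 : ∀ k : ZMod (2*t), z (k+1) * d k - z k * d k = 1 := by
        intro k; rw [hzb k]; linear_combination hdk k
      rw [Finset.sum_congr rfl (fun k _ => h3 k)]
      simp [hcardu]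
    have e3 : ∑ k : ZMod (2*t), (z k * d (k-1) - z (k+1) * d k) = 0 := by
      rw [Finset.sum_sub_distrib, h1, sub_self]
    rw [Finset.sum_add_distrib, Finset.sum_add_distrib, e2, e3]
    ring
  -- minima and maxima
  set P : ZMod (2*t) → Prop := fun k => z (k-1) > z k ∧ z (k+1) > z k with hP
  set Q : ZMod (2*t) → Prop := fun k => z (k-1) < z k ∧ z (k+1) < z k with hQ
  have htt : (t : ZMod (2*t)) + t = 0 := by
    have h := ZMod.natCast_self (2*t)
    push_cast at h
    linear_combination h
  have hPQ : ∀ k : ZMod (2*t), P k → Q (k + t) := by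
    rintro k ⟨hk1, hk2⟩
    have e1 : (k + t) - 1 = (k-1) + t := by ring
    have e2 : (k + t) + 1 = (k+1) + t := by ring
    constructor
    · show z ((k + t) - 1) < z (k + t)
      rw [e1, hant, hant]; omega
    · show z ((k + t) + 1) < z (k + t)
      rw [e2, hant, hant]; omega
  have hQP : ∀ k : ZMod (2*t), Q k → P (k + t) := by
    rintro k ⟨hk1, hk2⟩
    have e1 : (k + t) - 1 = (k-1) + t := by ring
    have e2 : (k + t) + 1 = (k+1) + t := by ring
    constructor
    · show z ((k + t) - 1) > z (k + t)
      rw [e1, hant, hant]; omega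
    · show z ((k + t) + 1) > z (k + t)
      rw [e2, hant, hant]; omega
  have hcardPQ : (Finset.univ.filter Q).card = (Finset.univ.filter P).card := by
    apply Finset.card_nbij' (fun k => k + (t : ZMod (2*t))) (fun k => k + (t : ZMod (2*t)))
    · intro k hk
      simp only [Finset.mem_filter, Finset.mem_univ, true_and, Finset.mem_coe] at hk ⊢
      exact hQP k hk
    · intro k hk
      simp only [Finset.mem_filter, Finset.mem_univ, true_and, Finset.mem_coe] at hk ⊢
      exact hPQ k hk
    · intro k _; dsimp only; rw [add_assoc, htt, add_zero]
    · intro k _; dsimp only; rw [add_assoc, htt, add_zero]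
  -- key2
  have key2 : ∑ k : ZMod (2*t), d (k-1) * d k
      = (2*t : ℤ) - 4 * (Finset.univ.filter P).card := by
    have e3 : ∀ k : ZMod (2*t), d (k-1) * d k
        = 1 - 2 * (if P k ∨ Q k then (1:ℤ) else 0) := by
      intro k
      have ha := hd (k-1); have hb := hd k
      have h1 := hza k; have h2 := hzb k
      rcases ha with ha | ha <;> rcases hb with hb | hb <;>
        rw [ha, hb] <;> rw [ha] at h1 <;> rw [hb] at h2
      · have hc : ¬ (P k ∨ Q k) := by rintro (⟨a, b⟩ | ⟨a, b⟩) <;> omega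
        rw [if_neg hc]; ring
      · have hc : P k ∨ Q k := Or.inr ⟨by omega, by omega⟩
        rw [if_pos hc]; ring
      · have hc : P k ∨ Q k := Or.inl ⟨by omega, by omega⟩
        rw [if_pos hc]; ring
      · have hc : ¬ (P k ∨ Q k) := by rintro (⟨a, b⟩ | ⟨a, b⟩) <;> omega
        rw [if_neg hc]; ring
    rw [Finset.sum_congr rfl (fun k _ => e3 k), Finset.sum_sub_distrib]
    rw [← Finset.mul_sum, Finset.sum_boole]
    have hdisj : Disjoint (Finset.univ.filter P) (Finset.univ.filter Q) := by
      rw [Finset.disjoint_left]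
      intro k hk hk'
      simp only [Finset.mem_filter, hP, hQ] at hk hk'
      omega
    rw [Finset.filter_or, Finset.card_union_of_disjoint hdisj, hcardPQ]
    simp only [hcardu, Finset.sum_const, nsmul_eq_mul, mul_one]
    push_cast
    ring
  -- conclude over ℤ
  have hZ : 4 * ((Finset.univ.filter P).card : ℤ)
      = 4*t - ∑ k : ZMod (2*t), (z k^2 - z (k-1) * z (k+1)) := by
    rw [key1, key2]; push_cast; ring
  -- convert to the statement
  have hmc : minimaCount t z = (Finset.univ.filter P).card := zmod_card_filter P
  have hsumcast : ∑ k ∈ Finset.range (2*t),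
      ((z (k : ZMod (2*t)) : ℝ)^2 -
        (z ((k : ZMod (2*t)) - 1) : ℝ) * (z ((k : ZMod (2*t)) + 1) : ℝ))
      = ((∑ k : ZMod (2*t), (z k^2 - z (k-1) * z (k+1)) : ℤ) : ℝ) := by
    rw [← zmod_sum_range (fun k => z k^2 - z (k-1) * z (k+1))]
    push_cast
    rfl
  rw [hsumcast]
  have hZ' : 4 * ((minimaCount t z : ℤ))
      = 4*(t:ℤ) - ∑ k : ZMod (2*t), (z k^2 - z (k-1) * z (k+1)) := by
    rw [hmc]; exact hZ
  have hZR := congrArg (fun x : ℤ => (x : ℝ)) hZ'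
  push_cast at hZR ⊢
  linarith
end

section
/- Let z : ZMod (2t) → ℂ satisfy z(j+t) = t - z(j) for all j. Then for every odd k with 0 ≤ k ≤ 2t-1, the DFT satisfies ẑ(k) = 2·( -t/(1 - exp(-πi·k/t)) + ∑_{j=0}^{t-1} z(j)·exp(-πi·k·j/t) ). -/
/-- Discrete Fourier transform of a `2t`-periodic sequence,
using the primitive `2t`-th root of unity `exp(-πi/t)`. -/
noncomputable def dft (t : ℕ) (z : ZMod (2*t) → ℂ) (k : ℕ) : ℂ :=
  ∑ j ∈ Finset.range (2*t),
    z (j : ZMod (2*t)) * Complex.exp (-(Real.pi : ℂ) * Complex.I * k * j / t)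

theorem dft_odd_components (t : ℕ) (ht : 0 < t) (z : ZMod (2*t) → ℂ)
    (hant : ∀ j : ZMod (2*t), z (j + (t : ZMod (2*t))) = (t : ℂ) - z j) :
    ∀ k : ℕ, k ≤ 2*t - 1 → Odd k →
      dft t z k = 2 * (-(t : ℂ) / (1 - Complex.exp (-(Real.pi : ℂ) * Complex.I * k / t))
        + ∑ j ∈ Finset.range t,
            z (j : ZMod (2*t)) * Complex.exp (-(Real.pi : ℂ) * Complex.I * k * j / t)) := by
  intro k hk hodd
  have ht' : (t : ℂ) ≠ 0 := Nat.cast_ne_zero.mpr ht.ne'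
  set x : ℂ := Complex.exp (-(Real.pi : ℂ) * Complex.I * k / t) with hx
  have hxm : ∀ m : ℕ, Complex.exp (-(Real.pi : ℂ) * Complex.I * k * m / t) = x ^ m := by
    intro m
    rw [hx, ← Complex.exp_nat_mul]
    congr 1
    field_simp
  have hxt : x ^ t = -1 := by
    rw [hx, ← Complex.exp_nat_mul]
    have h1 : (t : ℂ) * (-(Real.pi : ℂ) * Complex.I * k / t) = -(k * ((Real.pi : ℂ) * Complex.I)) := by
      field_simp
    rw [h1, Complex.exp_neg, Complex.exp_nat_mul, Complex.exp_pi_mul_I, hodd.neg_one_pow]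
    norm_num
  have hx1 : x ≠ 1 := by
    intro h
    rw [h, one_pow] at hxt
    norm_num at hxt
  have hgeom : ∑ m ∈ Finset.range t, x ^ m = 2 / (1 - x) := by
    rw [geom_sum_eq hx1, hxt]
    rw [div_eq_div_iff (sub_ne_zero.mpr hx1) (sub_ne_zero.mpr (Ne.symm hx1))]
    ring
  have hcast : ∀ m : ℕ, ((t + m : ℕ) : ZMod (2*t)) = (m : ZMod (2*t)) + (t : ZMod (2*t)) := by
    intro m; push_cast; ring
  have hsplit : dft t z k
      = (∑ m ∈ Finset.range t, z (m : ZMod (2*t)) * x ^ m)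
        + ∑ m ∈ Finset.range t, ((t : ℂ) - z (m : ZMod (2*t))) * (-(x ^ m)) := by
    unfold dft
    rw [show Finset.range (2*t) = Finset.range (t+t) from by rw [two_mul], Finset.sum_range_add]
    congr 1
    · exact Finset.sum_congr rfl fun m _ => by rw [hxm]
    · refine Finset.sum_congr rfl fun m _ => ?_
      rw [hcast, hant]
      congr 1
      have : (-(Real.pi : ℂ) * Complex.I * k * (t + m : ℕ) / t)
          = (t : ℂ) * (-(Real.pi : ℂ) * Complex.I * k / t) + (-(Real.pi : ℂ) * Complex.I * k * m / t) := by
        push_cast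
        field_simp
        ring
      rw [this, Complex.exp_add, Complex.exp_nat_mul, ← hx, hxt, hxm]
      ring
  rw [hsplit]
  have : ∑ m ∈ Finset.range t, ((t : ℂ) - z (m : ZMod (2*t))) * (-(x ^ m))
      = (∑ m ∈ Finset.range t, z (m : ZMod (2*t)) * x ^ m) - (t : ℂ) * ∑ m ∈ Finset.range t, x ^ m := by
    rw [Finset.mul_sum, ← Finset.sum_sub_distrib]
    exact Finset.sum_congr rfl fun m _ => by ring
  rw [this, hgeom]
  have hS : ∑ j ∈ Finset.range t, z (j : ZMod (2*t)) * Complex.exp (-(Real.pi : ℂ) * Complex.I * k * j / t)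
      = ∑ m ∈ Finset.range t, z (m : ZMod (2*t)) * x ^ m :=
    Finset.sum_congr rfl fun m _ => by rw [hxm]
  rw [hS]
  have h1x : (1 : ℂ) - x ≠ 0 := sub_ne_zero.mpr (Ne.symm hx1)
  field_simp
  ring
end

section
/- Let z : ZMod (2t) → ℤ satisfy |z(k+1) - z(k)| = 1 and z(k+t) = t - z(k) for all k, and let ẑ(k) = ∑_{j=0}^{2t-1} z(j)·exp(-πi·k·j/t). Then the number of local minima of z equals t - (1/(4t))·∑_{k=0}^{2t-1} |ẑ(k)|²·sin²(πk/t). -/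
open Finset Complex

/-! ### Auxiliary: roots of unity machinery -/

noncomputable def rt (n : ℕ) : ℂ := Complex.exp (-(2 * (Real.pi:ℂ) * Complex.I) / n)

lemma rt_pow_n {n : ℕ} (hn : n ≠ 0) : rt n ^ n = 1 := by
  rw [rt, ← Complex.exp_nat_mul]
  have : (n:ℂ) ≠ 0 := Nat.cast_ne_zero.mpr hn
  rw [mul_div_assoc', mul_comm, mul_div_assoc, div_self this, mul_one, Complex.exp_neg,
    Complex.exp_two_pi_mul_I, inv_one]

lemma rt_prim {n : ℕ} (hn : n ≠ 0) : IsPrimitiveRoot (rt n) n := by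
  have h := (Complex.isPrimitiveRoot_exp n hn).inv
  have : rt n = (Complex.exp (2 * (Real.pi:ℂ) * Complex.I / n))⁻¹ := by
    rw [← Complex.exp_neg, rt, neg_div]
  rwa [← this] at h

noncomputable def Ef (n : ℕ) : ZMod n → ℂ := fun a => rt n ^ a.val

lemma rt_pow {n : ℕ} [NeZero n] (m : ℕ) : rt n ^ m = Ef n (m : ZMod n) := by
  have hn := NeZero.ne n
  rw [Ef, ZMod.val_natCast]
  conv_lhs => rw [← Nat.div_add_mod m n]
  rw [pow_add, pow_mul, rt_pow_n hn, one_pow, one_mul]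

lemma Ef_zero {n : ℕ} [NeZero n] : Ef n 0 = 1 := by
  simp [Ef, ZMod.val_zero]

lemma Ef_add {n : ℕ} [NeZero n] (a b : ZMod n) : Ef n (a + b) = Ef n a * Ef n b := by
  have : Ef n (a+b) = rt n ^ (a.val + b.val) := by
    rw [rt_pow]; push_cast [ZMod.natCast_val, ZMod.cast_id]; ring_nf
  rw [this, pow_add, Ef, Ef]

lemma Ef_abs {n : ℕ} (a : ZMod n) : ‖Ef n a‖ = 1 := by
  rw [Ef, norm_pow, rt, Complex.norm_exp]
  have : (-(2 * (Real.pi:ℂ) * Complex.I) / n).re = 0 := by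
    simp [Complex.div_re]
  rw [this, Real.exp_zero, one_pow]

lemma Ef_neg {n : ℕ} [NeZero n] (a : ZMod n) : Ef n (-a) = (Ef n a)⁻¹ := by
  have h : Ef n a * Ef n (-a) = 1 := by rw [← Ef_add, add_neg_cancel, Ef_zero]
  exact eq_inv_of_mul_eq_one_right h

lemma Ef_conj {n : ℕ} [NeZero n] (a : ZMod n) :
    (starRingEnd ℂ) (Ef n a) = Ef n (-a) := by
  have h1 : Ef n a * (starRingEnd ℂ) (Ef n a) = 1 := by
    rw [Complex.mul_conj, ← Complex.sq_norm, Ef_abs]; norm_num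
  rw [Ef_neg]
  exact eq_inv_of_mul_eq_one_right h1

lemma sum_range_zmod' {n : ℕ} [NeZero n] {M : Type*} [AddCommMonoid M] (F : ZMod n → M) :
    ∑ k ∈ range n, F (k : ZMod n) = ∑ k : ZMod n, F k := by
  refine Finset.sum_nbij' (fun k => (k : ZMod n)) (fun a => a.val) ?_ ?_ ?_ ?_ ?_
  · intro a _; exact mem_univ _
  · intro a _; exact mem_range.mpr (ZMod.val_lt a)
  · intro a ha; rw [ZMod.val_natCast, Nat.mod_eq_of_lt (mem_range.mp ha)]
  · intro a _; simp [ZMod.natCast_val, ZMod.cast_id]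
  · intro a _; rfl

lemma Ef_orth {n : ℕ} [NeZero n] (a : ZMod n) :
    ∑ k : ZMod n, Ef n (k * a) = if a = 0 then (n : ℂ) else 0 := by
  have hn := NeZero.ne n
  have key : ∀ k : ZMod n, Ef n (k * a) = (rt n ^ a.val) ^ k.val := by
    intro k
    rw [← pow_mul, mul_comm a.val, rt_pow]
    congr 1
    push_cast [ZMod.natCast_val, ZMod.cast_id]; ring
  rw [← sum_range_zmod' (fun k => Ef n (k * a))]
  have h2 : ∀ k ∈ range n, Ef n ((k : ZMod n) * a) = (rt n ^ a.val) ^ k := by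
    intro k hk
    rw [key, ZMod.val_natCast, Nat.mod_eq_of_lt (mem_range.mp hk)]
  rw [Finset.sum_congr rfl h2]
  by_cases ha : a = 0
  · subst ha; simp [ZMod.val_zero, Finset.card_range]
  · have hx : rt n ^ a.val ≠ 1 := by
      intro h
      have hdvd := ((rt_prim hn).pow_eq_one_iff_dvd a.val).mp h
      have := Nat.eq_zero_of_dvd_of_lt hdvd (ZMod.val_lt a)
      · exact ha (by rwa [← ZMod.val_eq_zero])
    rw [geom_sum_eq hx, ← pow_mul, mul_comm a.val n, pow_mul, rt_pow_n hn, one_pow,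
      sub_self, zero_div, if_neg ha]

/-! ### Correlation / Plancherel -/

noncomputable def Zt (n : ℕ) [NeZero n] (F : ZMod n → ℂ) (k : ZMod n) : ℂ :=
  ∑ j : ZMod n, F j * Ef n (k * j)

lemma Zt_conj {n : ℕ} [NeZero n] (F : ZMod n → ℂ)
    (hF : ∀ j, (starRingEnd ℂ) (F j) = F j) (k : ZMod n) :
    (starRingEnd ℂ) (Zt n F k) = ∑ l : ZMod n, F l * Ef n (-(k * l)) := by
  rw [Zt, map_sum]
  exact Finset.sum_congr rfl fun l _ => by rw [map_mul, hF, Ef_conj]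

lemma corr {n : ℕ} [NeZero n] (F : ZMod n → ℂ)
    (hF : ∀ j, (starRingEnd ℂ) (F j) = F j) (c : ZMod n) :
    ∑ k : ZMod n, Zt n F k * (starRingEnd ℂ) (Zt n F k) * Ef n (c * k)
      = (n : ℂ) * ∑ j : ZMod n, F j * F (j + c) := by
  have expand : ∀ k : ZMod n, Zt n F k * (starRingEnd ℂ) (Zt n F k) * Ef n (c * k)
      = ∑ j : ZMod n, ∑ l : ZMod n, F j * F l * Ef n (k * (j - l + c)) := by
    intro k
    rw [Zt_conj F hF k, Zt, Finset.sum_mul_sum, Finset.sum_mul]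
    refine Finset.sum_congr rfl fun j _ => ?_
    rw [Finset.sum_mul]
    refine Finset.sum_congr rfl fun l _ => ?_
    have h : k * (j - l + c) = k * j + (-(k * l) + c * k) := by ring
    rw [h, Ef_add, Ef_add]
    ring
  rw [Finset.sum_congr rfl fun k _ => expand k]
  rw [Finset.sum_comm]
  have step1 : ∀ j : ZMod n, ∑ k : ZMod n, ∑ l : ZMod n, F j * F l * Ef n (k * (j - l + c))
      = F j * F (j + c) * n := by
    intro j
    rw [Finset.sum_comm]
    have inner : ∀ l : ZMod n, ∑ k : ZMod n, F j * F l * Ef n (k * (j - l + c))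
        = if j + c = l then F j * F l * n else 0 := by
      intro l
      rw [← Finset.mul_sum, Ef_orth]
      by_cases h : j + c = l
      · rw [if_pos (by rw [sub_add_eq_add_sub, sub_eq_zero]; exact h), if_pos h]
      · rw [if_neg (fun hc => h (by rw [sub_add_eq_add_sub, sub_eq_zero] at hc; exact hc)),
          if_neg h, mul_zero]
    rw [Finset.sum_congr rfl fun l _ => inner l, Finset.sum_ite_eq]
    simp
  rw [Finset.sum_congr rfl fun j _ => step1 j, ← Finset.sum_mul]
  ring

lemma sin_sq (t : ℕ) (ht : t ≠ 0) (k : ℕ) :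
    ((Real.sin (Real.pi * k / t) : ℂ))^2
      = (2 - Ef (2*t) (2*(k : ZMod (2*t))) - Ef (2*t) (-(2*(k : ZMod (2*t)))))/4 := by
  haveI : NeZero (2*t) := ⟨by omega⟩
  set x : ℂ := (Real.pi : ℂ) * k / t with hx
  have hcast : ((Real.sin (Real.pi * k / t) : ℂ)) = Complex.sin x := by
    rw [Complex.ofReal_sin]; push_cast; rfl
  have hE2 : Ef (2*t) (2*(k : ZMod (2*t))) = Complex.exp (-x * Complex.I) ^ 2 := by
    have h1 : Ef (2*t) (2*(k : ZMod (2*t))) = rt (2*t) ^ (2*k) := by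
      rw [rt_pow (n := 2*t) (2*k)]; push_cast; ring_nf
    rw [h1, rt, ← Complex.exp_nat_mul, ← Complex.exp_nat_mul]
    congr 1
    have htc : (t : ℂ) ≠ 0 := Nat.cast_ne_zero.mpr ht
    rw [hx]; push_cast
    ring
  have hE2' : Ef (2*t) (-(2*(k : ZMod (2*t)))) = Complex.exp (x * Complex.I) ^ 2 := by
    rw [Ef_neg, hE2, ← Complex.exp_nat_mul, ← Complex.exp_nat_mul, ← Complex.exp_neg]
    congr 1; ring
  rw [hcast, hE2, hE2', Complex.sin]
  have e1 : Complex.exp (-x * Complex.I) * Complex.exp (x * Complex.I) = 1 := by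
    rw [← Complex.exp_add]; ring_nf; exact Complex.exp_zero
  have hI := Complex.I_sq
  linear_combination ((Complex.exp (-x*Complex.I) - Complex.exp (x*Complex.I))^2/4) * hI + e1/2

lemma dft_eq (t : ℕ) (ht : t ≠ 0) [NeZero (2*t)] (w : ZMod (2*t) → ℂ) (k : ℕ) :
    dft t w k = Zt (2*t) w ((k : ZMod (2*t))) := by
  rw [dft]
  have hterm : ∀ j ∈ range (2*t),
      w (j : ZMod (2*t)) * Complex.exp (-(Real.pi : ℂ) * Complex.I * k * j / t)
        = w (j : ZMod (2*t)) * Ef (2*t) ((k : ZMod (2*t)) * (j : ZMod (2*t))) := by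
    intro j _
    congr 1
    have h1 : Complex.exp (-(Real.pi:ℂ) * Complex.I * k * j / t) = rt (2*t) ^ (k*j) := by
      rw [rt, ← Complex.exp_nat_mul]
      congr 1
      have htc : (t:ℂ) ≠ 0 := Nat.cast_ne_zero.mpr ht
      push_cast
      field_simp
    rw [h1, rt_pow]
    congr 1
    push_cast
    ring
  rw [Finset.sum_congr rfl hterm,
    sum_range_zmod' (fun a : ZMod (2*t) => w a * Ef (2*t) ((k : ZMod (2*t)) * a)), Zt]

/-! ### Combinatorial part -/

lemma cnt_shift {n : ℕ} [NeZero n] (q : ZMod n → Prop) [DecidablePred q] (c : ZMod n) :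
    (univ.filter (fun k : ZMod n => q (k + c))).card = (univ.filter q).card := by
  rw [Finset.card_filter, Finset.card_filter]
  exact Fintype.sum_equiv (Equiv.addRight c) _ _ (fun k => rfl)

lemma comb (t : ℕ) [NeZero (2*t)] (z : ZMod (2*t) → ℤ)
    (hstep : ∀ k : ZMod (2*t), |z (k + 1) - z k| = 1) :
    8 * (minimaCount t z : ℤ) = 8 * t - ∑ l : ZMod (2*t), (z (l + 2) - z l)^2 := by
  let d : ZMod (2*t) → ℤ := fun k => z (k + 1) - z k
  have hpm : ∀ k, d k = 1 ∨ d k = -1 := fun k => (abs_eq (by norm_num)).mp (hstep k)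
  have h1 : minimaCount t z
      = (univ.filter (fun k : ZMod (2*t) => d (k - 1) = -1 ∧ d k = 1)).card := by
    rw [minimaCount, Finset.card_filter, Finset.card_filter]
    rw [sum_range_zmod' (fun a : ZMod (2*t) =>
      if z (a - 1) > z a ∧ z (a + 1) > z a then (1:ℕ) else 0)]
    refine Finset.sum_congr rfl fun a _ => ?_
    congr 1
    have e1 : (z (a - 1) > z a) = (d (a - 1) = -1) := by
      have hda : d (a - 1) = z a - z (a - 1) := by
        show z (a - 1 + 1) - z (a - 1) = _
        rw [sub_add_cancel]
      rw [hda]; simp only [eq_iff_iff]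
      rcases hpm (a - 1) with h | h <;> rw [hda] at h <;>
        constructor <;> intro <;> omega
    have e2 : (z (a + 1) > z a) = (d a = 1) := by
      have hda : d a = z (a + 1) - z a := rfl
      rw [hda]; simp only [eq_iff_iff]
      rcases hpm a with h | h <;> rw [hda] at h <;>
        constructor <;> intro <;> omega
    rw [e1, e2]
  have h2 : (univ.filter (fun k : ZMod (2*t) => d (k - 1) = -1 ∧ d k = 1)).card
      = (univ.filter (fun k : ZMod (2*t) => d k = -1 ∧ d (k + 1) = 1)).card := by
    have h := cnt_shift (fun k : ZMod (2*t) => d (k - 1) = -1 ∧ d k = 1) 1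
    rw [← h]
    congr 1; ext k; simp [add_sub_cancel_right]
  have h3 : (univ.filter (fun k : ZMod (2*t) => d k = 1 ∧ d (k + 1) = -1)).card
      = (univ.filter (fun k : ZMod (2*t) => d k = -1 ∧ d (k + 1) = 1)).card := by
    have e1 : (univ.filter (fun k : ZMod (2*t) => d (k + 1) = 1)).card
        = (univ.filter (fun k : ZMod (2*t) => d k = 1)).card :=
      cnt_shift (fun k : ZMod (2*t) => d k = 1) 1
    have key1 : (univ.filter (fun k : ZMod (2*t) => d k = 1)).card
        = (univ.filter (fun k => d k = 1 ∧ d (k+1) = 1)).card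
          + (univ.filter (fun k => d k = 1 ∧ d (k+1) = -1)).card := by
      have h := Finset.card_filter_add_card_filter_not
        (s := univ.filter (fun k : ZMod (2*t) => d k = 1))
        (p := fun k : ZMod (2*t) => d (k + 1) = 1)
      rw [Finset.filter_filter, Finset.filter_filter] at h
      rw [← h]
      congr 2
      ext k
      rcases hpm (k + 1) with hh | hh <;> simp [hh]
    have key2 : (univ.filter (fun k : ZMod (2*t) => d (k+1) = 1)).card
        = (univ.filter (fun k => d k = 1 ∧ d (k+1) = 1)).card
          + (univ.filter (fun k => d k = -1 ∧ d (k+1) = 1)).card := by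
      have h := Finset.card_filter_add_card_filter_not
        (s := univ.filter (fun k : ZMod (2*t) => d (k+1) = 1))
        (p := fun k : ZMod (2*t) => d k = 1)
      rw [Finset.filter_filter, Finset.filter_filter] at h
      rw [← h]
      have c1 : (univ.filter (fun k : ZMod (2*t) => d (k+1) = 1 ∧ d k = 1))
          = (univ.filter (fun k => d k = 1 ∧ d (k+1) = 1)) := by
        ext k; simp [and_comm]
      have c2 : (univ.filter (fun k : ZMod (2*t) => d (k+1) = 1 ∧ ¬ d k = 1))
          = (univ.filter (fun k => d k = -1 ∧ d (k+1) = 1)) := by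
        ext k
        rcases hpm k with hh | hh <;> simp [hh, and_comm]
      rw [c1, c2]
    omega
  have hcast : ∀ (p : ZMod (2*t) → Prop) [DecidablePred p],
      ∑ l : ZMod (2*t), (if p l then (1:ℤ) else 0) = ((univ.filter p).card : ℤ) := by
    intro p _
    rw [Finset.card_filter]
    push_cast
    rfl
  have h4 : ∑ l : ZMod (2*t), (z (l + 2) - z l)^2
      = 4 * (2*t : ℤ)
        - 4 * ((univ.filter (fun k : ZMod (2*t) => d k = 1 ∧ d (k+1) = -1)).card : ℤ)
        - 4 * ((univ.filter (fun k : ZMod (2*t) => d k = -1 ∧ d (k+1) = 1)).card : ℤ) := by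
    have hterm : ∀ l : ZMod (2*t), (z (l + 2) - z l)^2
        = (4:ℤ) - 4 * (if d l = 1 ∧ d (l+1) = -1 then (1:ℤ) else 0)
          - 4 * (if d l = -1 ∧ d (l+1) = 1 then (1:ℤ) else 0) := by
      intro l
      have hz : z (l + 2) - z l = d (l + 1) + d l := by
        show z (l + 2) - z l = (z (l + 1 + 1) - z (l + 1)) + (z (l + 1) - z l)
        have h : l + 1 + 1 = l + 2 := by ring
        rw [h]; ring
      rw [hz]
      rcases hpm l with h | h <;> rcases hpm (l+1) with h' | h' <;>
        simp [h, h']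
    rw [Finset.sum_congr rfl fun l _ => hterm l, Finset.sum_sub_distrib,
      Finset.sum_sub_distrib, Finset.sum_const, ← Finset.mul_sum, ← Finset.mul_sum,
      hcast _, hcast _]
    simp [ZMod.card]
    ring
  rw [h4, h3, h1, h2]
  ring

/-! ### Main theorem -/

theorem minima_eq_sin_formula (t : ℕ) (ht : 2 ≤ t) (z : ZMod (2*t) → ℤ)
    (hstep : ∀ k : ZMod (2*t), |z (k + 1) - z k| = 1)
    (hant : ∀ k : ZMod (2*t), z (k + (t : ZMod (2*t))) = (t : ℤ) - z k) :
    (minimaCount t z : ℝ) =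
      (t : ℝ) - (1/(4*(t:ℝ))) * ∑ k ∈ Finset.range (2*t),
        (‖dft t (fun j => (z j : ℂ)) k‖)^2 * (Real.sin (Real.pi * k / t))^2 := by
  haveI : NeZero (2*t) := ⟨by omega⟩
  have htn : t ≠ 0 := by omega
  set F : ZMod (2*t) → ℂ := fun j => ((z j : ℤ) : ℂ) with hFdef
  have hF : ∀ j, (starRingEnd ℂ) (F j) = F j := fun j =>
    map_intCast (starRingEnd ℂ) (z j)
  set D : ℤ := ∑ l : ZMod (2*t), (z (l + 2) - z l)^2 with hD
  -- the complex computation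
  have hsum : ((∑ k ∈ Finset.range (2*t),
        (‖dft t (fun j => (z j : ℂ)) k‖)^2 * (Real.sin (Real.pi * k / t))^2 : ℝ) : ℂ)
      = ((2*t : ℕ) : ℂ)/4 * (D : ℂ) := by
    rw [Complex.ofReal_sum]
    have hterm : ∀ k ∈ Finset.range (2*t),
        (((‖dft t (fun j => (z j : ℂ)) k‖)^2 * (Real.sin (Real.pi * k / t))^2 : ℝ) : ℂ)
          = Zt (2*t) F (k : ZMod (2*t)) * (starRingEnd ℂ) (Zt (2*t) F (k : ZMod (2*t)))
            * ((2 - Ef (2*t) (2*(k : ZMod (2*t))) - Ef (2*t) (-(2*(k : ZMod (2*t)))))/4) := by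
      intro k _
      rw [Complex.ofReal_mul, Complex.ofReal_pow, Complex.ofReal_pow, sin_sq t htn k]
      congr 1
      have habs : ((‖dft t (fun j => (z j : ℂ)) k‖ : ℂ))^2
          = dft t (fun j => (z j : ℂ)) k * (starRingEnd ℂ) (dft t (fun j => (z j : ℂ)) k) := by
        rw [← Complex.ofReal_pow, Complex.sq_norm, Complex.mul_conj]
      rw [habs, dft_eq t htn]
    rw [Finset.sum_congr rfl hterm,
      sum_range_zmod' (fun a : ZMod (2*t) => Zt (2*t) F a * (starRingEnd ℂ) (Zt (2*t) F a)
        * ((2 - Ef (2*t) (2*a) - Ef (2*t) (-(2*a)))/4))]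
    -- split into three correlation sums
    have hsplit : ∀ a : ZMod (2*t),
        Zt (2*t) F a * (starRingEnd ℂ) (Zt (2*t) F a)
          * ((2 - Ef (2*t) (2*a) - Ef (2*t) (-(2*a)))/4)
        = (2 * (Zt (2*t) F a * (starRingEnd ℂ) (Zt (2*t) F a) * Ef (2*t) ((0 : ZMod (2*t)) * a))
            - Zt (2*t) F a * (starRingEnd ℂ) (Zt (2*t) F a) * Ef (2*t) ((2 : ZMod (2*t)) * a)
            - Zt (2*t) F a * (starRingEnd ℂ) (Zt (2*t) F a) * Ef (2*t) ((-2 : ZMod (2*t)) * a))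
            / 4 := by
      intro a
      have h0 : (0 : ZMod (2*t)) * a = 0 := by ring
      have hm : (-2 : ZMod (2*t)) * a = -(2*a) := by ring
      rw [h0, hm, Ef_zero]
      ring
    rw [Finset.sum_congr rfl fun a _ => hsplit a]
    rw [← Finset.sum_div, Finset.sum_sub_distrib, Finset.sum_sub_distrib, ← Finset.mul_sum]
    rw [corr F hF 0, corr F hF 2, corr F hF (-2)]
    -- reindex the two shifted sums
    have hshift1 : ∑ j : ZMod (2*t), F (j + 2) * F (j + 2 + -2) = ∑ j : ZMod (2*t), F j * F (j + -2) :=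
      Fintype.sum_equiv (Equiv.addRight (2 : ZMod (2*t)))
        (fun j => F (j + 2) * F (j + 2 + -2)) (fun j => F j * F (j + -2)) (fun j => rfl)
    have hshift1' : ∑ j : ZMod (2*t), F j * F (j + -2) = ∑ j : ZMod (2*t), F (j + 2) * F j := by
      rw [← hshift1]
      refine Finset.sum_congr rfl fun j _ => ?_
      have : j + 2 + -2 = j := by ring
      rw [this]
    have hshift2 : ∑ j : ZMod (2*t), F (j + 2) ^ 2 = ∑ j : ZMod (2*t), F j ^ 2 := by
      refine Fintype.sum_equiv (Equiv.subRight (2 : ZMod (2*t)))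
        (fun j => F j ^ 2) (fun j => F (j + 2)^2) (fun j => by simp only [Equiv.subRight_apply]; rw [sub_add_cancel]) |>.symm
    have hDc : (D : ℂ) = ∑ j : ZMod (2*t), (F (j + 2) - F j)^2 := by
      rw [hD]
      push_cast [hFdef]
      rfl
    have hexp : ∑ j : ZMod (2*t), (F (j + 2) - F j)^2
        = ∑ j : ZMod (2*t), F (j+2)^2 + ∑ j : ZMod (2*t), F j ^2
          - 2 * ∑ j : ZMod (2*t), F (j+2) * F j := by
      rw [Finset.mul_sum, ← Finset.sum_add_distrib, ← Finset.sum_sub_distrib]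
      refine Finset.sum_congr rfl fun j _ => ?_
      ring
    have hz0 : ∑ j : ZMod (2*t), F j * F (j + 0) = ∑ j : ZMod (2*t), F j ^ 2 := by
      refine Finset.sum_congr rfl fun j _ => ?_
      rw [add_zero]; ring
    have hz2 : ∑ j : ZMod (2*t), F j * F (j + 2) = ∑ j : ZMod (2*t), F (j + 2) * F j := by
      refine Finset.sum_congr rfl fun j _ => ?_
      ring
    rw [hz0, hz2, hshift1', hDc, hexp, hshift2]
    ring
  -- go back to the reals
  have hreal : (∑ k ∈ Finset.range (2*t),
        (‖dft t (fun j => (z j : ℂ)) k‖)^2 * (Real.sin (Real.pi * k / t))^2 : ℝ)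
      = (2*t : ℝ)/4 * (D : ℝ) := by
    have h2 : (((2*t : ℝ)/4 * (D : ℝ) : ℝ) : ℂ) = ((2*t : ℕ) : ℂ)/4 * (D : ℂ) := by
      push_cast
      ring
    exact Complex.ofReal_injective (by rw [hsum, ← h2])
  rw [hreal]
  have hcomb := comb t z hstep
  rw [← hD] at hcomb
  have hcombR : 8 * (minimaCount t z : ℝ) = 8 * t - D := by exact_mod_cast hcomb
  have htR : (t : ℝ) ≠ 0 := Nat.cast_ne_zero.mpr htn
  have hdiv : 1/(4*(t:ℝ)) * ((2*t : ℝ)/4 * (D : ℝ)) = (D : ℝ)/8 := by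
    field_simp
    ring
  rw [hdiv]
  linarith
end

section
/- Let z : ZMod (2t) → ℤ satisfy |z(k+1) - z(k)| = 1 and z(k+t) = t - z(k) for all k. Then the number of local minima of z equals t - (1/2)·∑ₖ z(k)² + (1/(4t))·∑_{k=0}^{2t-1} |ẑ(k)|²·cos²(πk/t). -/
namespace MinimaAux

open Finset Complex

lemma sum_range_eq_sum_zmod {n : ℕ} [NeZero n] {M : Type*} [AddCommMonoid M] (f : ZMod n → M) :
    ∑ k ∈ Finset.range n, f (k : ZMod n) = ∑ x : ZMod n, f x := by
  refine Finset.sum_nbij' (fun k => (k : ZMod n)) (fun x => x.val) ?_ ?_ ?_ ?_ ?_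
  · intro a _; exact Finset.mem_univ _
  · intro a _; exact Finset.mem_range.2 (ZMod.val_lt a)
  · intro a ha; exact ZMod.val_natCast_of_lt (Finset.mem_range.1 ha)
  · intro a _; simp [ZMod.natCast_val, ZMod.cast_id]
  · intro a _; rfl

lemma card_filter_range_eq {n : ℕ} [NeZero n] (P : ZMod n → Prop) [DecidablePred P] :
    ((Finset.range n).filter (fun k : ℕ => P (k : ZMod n))).card
      = (Finset.univ.filter P).card := by
  rw [Finset.card_filter, Finset.card_filter]
  exact sum_range_eq_sum_zmod (fun x => if P x then 1 else 0)

noncomputable def om (t : ℕ) : ℂ := Complex.exp (-(Real.pi : ℂ) * Complex.I / t)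
noncomputable def omb (t : ℕ) : ℂ := Complex.exp ((Real.pi : ℂ) * Complex.I / t)

lemma om_mul_omb (t : ℕ) : om t * omb t = 1 := by
  rw [om, omb, ← Complex.exp_add]; ring_nf; exact Complex.exp_zero

lemma conj_om (t : ℕ) : (starRingEnd ℂ) (om t) = omb t := by
  rw [om, omb, ← Complex.exp_conj]
  congr 1
  simp [div_eq_mul_inv, map_mul, Complex.conj_I]

lemma om_pow (t : ℕ) (m : ℕ) : om t ^ m = Complex.exp (m * (-(Real.pi : ℂ) * Complex.I / t)) := by
  rw [om, Complex.exp_nat_mul]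

lemma omb_pow (t : ℕ) (m : ℕ) : omb t ^ m = Complex.exp (m * ((Real.pi : ℂ) * Complex.I / t)) := by
  rw [omb, Complex.exp_nat_mul]

lemma om_pow_eq_one_iff (t : ℕ) (ht : 0 < t) (m : ℕ) : om t ^ m = 1 ↔ (2 * t) ∣ m := by
  have htR : (t : ℂ) ≠ 0 := Nat.cast_ne_zero.2 ht.ne'
  have hpi : (Real.pi : ℂ) ≠ 0 := by exact_mod_cast Real.pi_ne_zero
  rw [om, ← Complex.exp_nat_mul, Complex.exp_eq_one_iff]
  constructor
  · rintro ⟨k, hk⟩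
    have hIpi : (Real.pi : ℂ) * Complex.I ≠ 0 := mul_ne_zero hpi Complex.I_ne_zero
    have hk' : (m : ℂ) * (-(Real.pi : ℂ) * Complex.I) = k * (2 * (Real.pi:ℂ) * Complex.I) * t := by
      field_simp at hk
      linear_combination ((Real.pi : ℂ) * Complex.I) * hk
    have h4 : (m : ℂ) * (-1) = (k * 2 * t) * 1 := by
      apply mul_right_cancel₀ hIpi
      linear_combination hk'
    have h2 : (m : ℂ) = ((-2 * k * t : ℤ) : ℂ) := by push_cast; linear_combination -h4
    have h3 : (m : ℤ) = -2 * k * t := by exact_mod_cast h2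
    have : (2 * t : ℤ) ∣ (m : ℤ) := ⟨-k, by linarith [h3]⟩
    exact_mod_cast this
  · rintro ⟨c, hc⟩
    refine ⟨-c, ?_⟩
    subst hc
    push_cast
    field_simp

lemma parseval_aux (n : ℕ) (ω ωb : ℂ) (h1 : ω * ωb = 1)
    (hc : (starRingEnd ℂ) ω = ωb) (hω : ∀ m : ℕ, ω ^ m = 1 ↔ n ∣ m)
    (F : ℕ → ℂ) :
    ∑ k ∈ range n, Complex.normSq (∑ j ∈ range n, F j * ω ^ (k * j))
      = n * ∑ j ∈ range n, Complex.normSq (F j) := by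
  have hωne : ω ≠ 0 := left_ne_zero_of_mul_eq_one h1
  have hωn : ω ^ n = 1 := (hω n).2 dvd_rfl
  have hωbn : ωb ^ n = 1 := by
    have h' : (ω * ωb) ^ n = 1 := by rw [h1, one_pow]
    rw [mul_pow, hωn, one_mul] at h'; exact h'
  have key : ∑ k ∈ range n, ((∑ j ∈ range n, F j * ω ^ (k * j)) *
      (starRingEnd ℂ) (∑ j ∈ range n, F j * ω ^ (k * j)))
      = (n : ℂ) * ∑ j ∈ range n, (F j * (starRingEnd ℂ) (F j)) := by
    have expand : ∀ k ∈ range n, (∑ j ∈ range n, F j * ω ^ (k * j)) *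
        (starRingEnd ℂ) (∑ j ∈ range n, F j * ω ^ (k * j))
        = ∑ j ∈ range n, ∑ l ∈ range n,
            (F j * (starRingEnd ℂ) (F l)) * (ω ^ j * ωb ^ l) ^ k := by
      intro k _
      rw [map_sum, Finset.sum_mul_sum]
      refine Finset.sum_congr rfl fun j _ => Finset.sum_congr rfl fun l _ => ?_
      rw [map_mul, map_pow, hc]
      rw [mul_pow, ← pow_mul, ← pow_mul, mul_comm j k, mul_comm l k]
      ring
    rw [Finset.sum_congr rfl expand]
    rw [Finset.sum_comm]
    have inner : ∀ j ∈ range n, ∑ k ∈ range n, ∑ l ∈ range n,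
        (F j * (starRingEnd ℂ) (F l)) * (ω ^ j * ωb ^ l) ^ k
        = (F j * (starRingEnd ℂ) (F j)) * n := by
      intro j hj
      rw [Finset.sum_comm]
      have hl : ∀ l ∈ range n, ∑ k ∈ range n,
          (F j * (starRingEnd ℂ) (F l)) * (ω ^ j * ωb ^ l) ^ k
          = if l = j then (F j * (starRingEnd ℂ) (F j)) * n else 0 := by
        intro l hl
        rw [← Finset.mul_sum]
        by_cases hjl : l = j
        · subst hjl
          have hx : ω ^ l * ωb ^ l = 1 := by rw [← mul_pow, h1, one_pow]
          simp [hx]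
        · rw [if_neg hjl]
          have hx : ω ^ j * ωb ^ l ≠ 1 := by
            intro hx1
            have h2 : ω ^ j = ω ^ l := by
              calc ω ^ j = ω ^ j * (ωb ^ l * ω ^ l) := by
                    rw [← mul_pow, mul_comm ωb ω, h1, one_pow, mul_one]
                _ = ω ^ j * ωb ^ l * ω ^ l := by ring
                _ = ω ^ l := by rw [hx1, one_mul]
            have hjn := Finset.mem_range.1 hj
            have hln := Finset.mem_range.1 hl
            rcases lt_or_gt_of_ne (Ne.symm hjl) with hlt | hlt
            · have h4 : ω ^ j * ω ^ (l - j) = ω ^ j * 1 := by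
                rw [← pow_add, Nat.add_sub_cancel' hlt.le, h2, mul_one]
              have h3 : ω ^ (l - j) = 1 := mul_left_cancel₀ (pow_ne_zero _ hωne) h4
              have h5 := Nat.le_of_dvd (by omega) ((hω _).1 h3)
              omega
            · have h4 : ω ^ l * ω ^ (j - l) = ω ^ l * 1 := by
                rw [← pow_add, Nat.add_sub_cancel' hlt.le, ← h2, mul_one]
              have h3 : ω ^ (j - l) = 1 := mul_left_cancel₀ (pow_ne_zero _ hωne) h4
              have h5 := Nat.le_of_dvd (by omega) ((hω _).1 h3)
              omega
          have hx2 : (ω ^ j * ωb ^ l) ^ n = 1 := by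
            rw [mul_pow, ← pow_mul, mul_comm j n, pow_mul, hωn, one_pow,
              ← pow_mul, mul_comm l n, pow_mul, hωbn, one_pow, one_mul]
          rw [geom_sum_eq hx, hx2, sub_self, zero_div, mul_zero]
      rw [Finset.sum_congr rfl hl, Finset.sum_ite_eq' (range n) j]
      rw [if_pos hj]
    rw [Finset.sum_congr rfl inner, ← Finset.sum_mul, mul_comm]
  have final : ((∑ k ∈ range n, Complex.normSq (∑ j ∈ range n, F j * ω ^ (k * j)) : ℝ) : ℂ)
      = ((n * ∑ j ∈ range n, Complex.normSq (F j) : ℝ) : ℂ) := by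
    push_cast
    calc (∑ k ∈ range n, (Complex.normSq (∑ j ∈ range n, F j * ω ^ (k * j)) : ℂ))
        = ∑ k ∈ range n, ((∑ j ∈ range n, F j * ω ^ (k * j)) *
            (starRingEnd ℂ) (∑ j ∈ range n, F j * ω ^ (k * j))) := by
          refine Finset.sum_congr rfl fun k _ => ?_; rw [Complex.mul_conj]
      _ = (n : ℂ) * ∑ j ∈ range n, (F j * (starRingEnd ℂ) (F j)) := key
      _ = (n : ℂ) * ∑ j ∈ range n, (Complex.normSq (F j) : ℂ) := by
          congr 1; refine Finset.sum_congr rfl fun j _ => ?_; rw [Complex.mul_conj]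
  exact_mod_cast final

lemma shift (t : ℕ) (ht : 2 ≤ t) (hcn : ∀ m : ℕ, (2*t) ∣ m → om t ^ m = 1)
    (F : ZMod (2*t) → ℂ) (k : ℕ) :
    dft t F k * ((Real.cos (Real.pi * k / t) : ℝ) : ℂ)
      = ∑ j ∈ Finset.range (2*t),
          ((F ((j : ZMod (2*t)) - 1) + F ((j : ZMod (2*t)) + 1)) / 2) * om t ^ (k * j) := by
  haveI : NeZero (2*t) := ⟨by omega⟩
  haveI : Fact (1 < 2*t) := ⟨by omega⟩
  set c : ℂ := om t ^ k with hc
  set cb : ℂ := omb t ^ k with hcb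
  have hccb : c * cb = 1 := by rw [hc, hcb, ← mul_pow, om_mul_omb, one_pow]
  have hcpow : c ^ (2*t) = 1 := by
    rw [hc, ← pow_mul]; exact hcn (k * (2*t)) ⟨k, by ring⟩
  have hcmod : ∀ j : ℕ, c ^ j = c ^ (j % (2*t)) := by
    intro j
    conv_lhs => rw [← Nat.div_add_mod j (2*t)]
    rw [pow_add, pow_mul, hcpow, one_pow, one_mul]
  set E : ZMod (2*t) → ℂ := fun x => c ^ x.val with hE
  have hEnat : ∀ j : ℕ, c ^ j = E ((j : ZMod (2*t))) := by
    intro j; rw [hE]; simp only [ZMod.val_natCast]; exact hcmod j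
  have hEadd : ∀ x y : ZMod (2*t), E (x + y) = E x * E y := by
    intro x y
    show c ^ (x + y).val = c ^ x.val * c ^ y.val
    rw [ZMod.val_add, ← hcmod, pow_add]
  have hE1 : E 1 = c := by show c ^ (1 : ZMod (2*t)).val = c; rw [ZMod.val_one]; exact pow_one c
  have hEsub : ∀ x : ZMod (2*t), E x * cb = E (x - 1) := by
    intro x
    have h1 : E (x - 1) * c = E x := by
      rw [← hE1, ← hEadd, sub_add_cancel]
    calc E x * cb = E (x - 1) * (c * cb) := by rw [← h1]; ring
      _ = E (x - 1) := by rw [hccb, mul_one]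
  have hEaddone : ∀ x : ZMod (2*t), E x * c = E (x + 1) := by
    intro x; rw [← hE1, ← hEadd]
  have hdft : dft t F k = ∑ x : ZMod (2*t), F x * E x := by
    rw [dft, ← sum_range_eq_sum_zmod (fun x => F x * E x)]
    refine Finset.sum_congr rfl fun j _ => ?_
    congr 1
    rw [← hEnat, hc, ← pow_mul, om_pow]
    congr 1
    push_cast; ring
  have hcos : ((Real.cos (Real.pi * k / t) : ℝ) : ℂ) = (cb + c) / 2 := by
    rw [Complex.ofReal_cos]
    have h2 := Complex.two_cos (x := ((Real.pi * k / t : ℝ) : ℂ))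
    have ha : Complex.exp (((Real.pi * k / t : ℝ) : ℂ) * Complex.I) = cb := by
      rw [hcb, omb_pow]; congr 1; push_cast; ring
    have hb : Complex.exp (-((Real.pi * k / t : ℝ) : ℂ) * Complex.I) = c := by
      rw [hc, om_pow]; congr 1; push_cast; ring
    rw [ha, hb] at h2
    linear_combination h2 / 2
  rw [hdft, hcos]
  have expand : (∑ x : ZMod (2*t), F x * E x) * ((cb + c) / 2)
      = (∑ x : ZMod (2*t), F x * E (x - 1)) / 2 + (∑ x : ZMod (2*t), F x * E (x + 1)) / 2 := by
    rw [Finset.sum_mul, ← add_div, ← Finset.sum_add_distrib, Finset.sum_div]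
    refine Finset.sum_congr rfl fun x _ => ?_
    rw [← hEsub, ← hEaddone]; ring
  rw [expand]
  have r1 : (∑ x : ZMod (2*t), F x * E (x - 1)) = ∑ y : ZMod (2*t), F (y + 1) * E y := by
    rw [← Equiv.sum_comp (Equiv.subRight (1 : ZMod (2*t))) (fun y => F (y + 1) * E y)]
    refine Finset.sum_congr rfl fun x _ => ?_
    simp [Equiv.subRight, sub_add_cancel]
  have r2 : (∑ x : ZMod (2*t), F x * E (x + 1)) = ∑ y : ZMod (2*t), F (y - 1) * E y := by
    rw [← Equiv.sum_comp (Equiv.addRight (1 : ZMod (2*t))) (fun y => F (y - 1) * E y)]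
    refine Finset.sum_congr rfl fun x _ => ?_
    simp [Equiv.addRight, add_sub_cancel_right]
  rw [r1, r2]
  rw [← sum_range_eq_sum_zmod (fun y => F (y + 1) * E y),
    ← sum_range_eq_sum_zmod (fun y => F (y - 1) * E y)]
  rw [← add_div, ← Finset.sum_add_distrib, Finset.sum_div]
  refine Finset.sum_congr rfl fun j _ => ?_
  rw [pow_mul, hEnat j]
  ring

lemma point_sq (a b c : ℤ) (h1 : b - c = 1 ∨ b - c = -1) (h2 : c - a = 1 ∨ c - a = -1) :
    (a + b - 2*c)^2 = (if a > c ∧ b > c then (4:ℤ) else 0) + (if a < c ∧ b < c then (4:ℤ) else 0) := by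
  rcases h1 with h1 | h1 <;> rcases h2 with h2 | h2
  · have h3 : a + b - 2*c = 0 := by omega
    rw [h3, if_neg (by omega), if_neg (by omega)]; ring
  · have h3 : a + b - 2*c = 2 := by omega
    rw [h3, if_pos (by omega), if_neg (by omega)]; ring
  · have h3 : a + b - 2*c = -2 := by omega
    rw [h3, if_neg (by omega), if_pos (by omega)]; ring
  · have h3 : a + b - 2*c = 0 := by omega
    rw [h3, if_neg (by omega), if_neg (by omega)]; ring

lemma key_int (t : ℕ) [NeZero (2*t)] (z : ZMod (2*t) → ℤ)
    (hstep : ∀ k : ZMod (2*t), |z (k + 1) - z k| = 1)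
    (hant : ∀ k : ZMod (2*t), z (k + (t : ZMod (2*t))) = (t : ℤ) - z k) :
    ∑ x : ZMod (2*t), ((z (x-1) + z (x+1))^2 - 4 * (z x)^2)
      = 8 * ((Finset.univ.filter (fun x : ZMod (2*t) =>
          z (x - 1) > z x ∧ z (x + 1) > z x)).card : ℤ) - 8 * t := by
  have hstep' : ∀ x : ZMod (2*t), z (x+1) - z x = 1 ∨ z (x+1) - z x = -1 := by
    intro x
    rcases abs_eq (by norm_num : (0:ℤ) ≤ 1) |>.1 (hstep x) with h | h
    · exact Or.inl h
    · exact Or.inr h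
  have hstep'' : ∀ x : ZMod (2*t), z x - z (x-1) = 1 ∨ z x - z (x-1) = -1 := by
    intro x
    have := hstep' (x - 1)
    rwa [sub_add_cancel] at this
  have split : ∀ x : ZMod (2*t), (z (x-1) + z (x+1))^2 - 4 * (z x)^2
      = (z (x-1) + z (x+1) - 2 * z x)^2 + 4 * ((z (x+1) - z x) * z x)
        - 4 * ((z x - z (x-1)) * z x) := by
    intro x; ring
  rw [Finset.sum_congr rfl fun x _ => split x]
  rw [Finset.sum_sub_distrib, Finset.sum_add_distrib]
  have tel : (∑ x : ZMod (2*t), 4 * ((z (x+1) - z x) * z (x+1)))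
      = ∑ x : ZMod (2*t), 4 * ((z x - z (x-1)) * z x) := by
    rw [← Equiv.sum_comp (Equiv.addRight (1 : ZMod (2*t)))
      (fun y => 4 * ((z y - z (y-1)) * z y))]
    refine Finset.sum_congr rfl fun x _ => ?_
    simp [Equiv.addRight, add_sub_cancel_right]
  have card_univ_zmod : (Finset.univ : Finset (ZMod (2*t))).card = 2*t := by
    rw [Finset.card_univ, ZMod.card]
  have dsq : ∀ x : ZMod (2*t), (z (x+1) - z x)^2 = 1 := by
    intro x
    rcases hstep' x with h | h <;> rw [h] <;> ring
  have tel3 : (∑ x : ZMod (2*t), 4 * ((z (x+1) - z x) * z x))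
      - (∑ x : ZMod (2*t), 4 * ((z (x+1) - z x) * z (x+1)))
      = -8 * (t : ℤ) := by
    rw [← Finset.sum_sub_distrib]
    have hpt : ∀ x : ZMod (2*t), 4 * ((z (x+1) - z x) * z x)
        - 4 * ((z (x+1) - z x) * z (x+1)) = -4 * (z (x+1) - z x)^2 := by
      intro x; ring
    rw [Finset.sum_congr rfl fun x _ => hpt x]
    rw [Finset.sum_congr rfl fun x _ => by rw [dsq x]]
    rw [Finset.sum_const, card_univ_zmod]
    push_cast; ring
  have sq_part : (∑ x : ZMod (2*t), (z (x-1) + z (x+1) - 2 * z x)^2)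
      = ∑ x : ZMod (2*t), ((if z (x-1) > z x ∧ z (x+1) > z x then (4:ℤ) else 0)
          + (if z (x-1) < z x ∧ z (x+1) < z x then (4:ℤ) else 0)) := by
    refine Finset.sum_congr rfl fun x _ => ?_
    exact point_sq (z (x-1)) (z (x+1)) (z x) (hstep' x) (hstep'' x)
  have maxmin : (Finset.univ.filter (fun x : ZMod (2*t) =>
        z (x - 1) < z x ∧ z (x + 1) < z x)).card
      = (Finset.univ.filter (fun x : ZMod (2*t) =>
        z (x - 1) > z x ∧ z (x + 1) > z x)).card := by
    have htt : (t : ZMod (2*t)) + (t : ZMod (2*t)) = 0 := by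
      rw [← Nat.cast_add]
      have h2t : t + t = 2 * t := by ring
      rw [h2t, ZMod.natCast_self]
    refine Finset.card_nbij' (fun x => x + (t : ZMod (2*t))) (fun x => x + (t : ZMod (2*t)))
      ?_ ?_ ?_ ?_
    · intro x hx
      rw [Finset.mem_coe, Finset.mem_filter] at hx ⊢
      obtain ⟨-, hx1, hx2⟩ := hx
      refine ⟨Finset.mem_univ _, ?_, ?_⟩
      · have e1 : x + (t : ZMod (2*t)) - 1 = (x - 1) + (t : ZMod (2*t)) := by ring
        rw [e1, hant, hant]; omega
      · have e2 : x + (t : ZMod (2*t)) + 1 = (x + 1) + (t : ZMod (2*t)) := by ring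
        rw [e2, hant, hant]; omega
    · intro x hx
      rw [Finset.mem_coe, Finset.mem_filter] at hx ⊢
      obtain ⟨-, hx1, hx2⟩ := hx
      refine ⟨Finset.mem_univ _, ?_, ?_⟩
      · have e1 : x + (t : ZMod (2*t)) - 1 = (x - 1) + (t : ZMod (2*t)) := by ring
        rw [e1, hant, hant]; omega
      · have e2 : x + (t : ZMod (2*t)) + 1 = (x + 1) + (t : ZMod (2*t)) := by ring
        rw [e2, hant, hant]; omega
    · intro x _; show x + (t : ZMod (2*t)) + (t : ZMod (2*t)) = x
      rw [add_assoc, htt, add_zero]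
    · intro x _; show x + (t : ZMod (2*t)) + (t : ZMod (2*t)) = x
      rw [add_assoc, htt, add_zero]
  have count : ∀ (P : ZMod (2*t) → Prop) (_ : DecidablePred P),
      (∑ x : ZMod (2*t), if P x then (4:ℤ) else 0)
        = 4 * ((Finset.univ.filter P).card : ℤ) := by
    intro P hP
    rw [Finset.sum_ite, Finset.sum_const, Finset.sum_const_zero, add_zero]
    rw [nsmul_eq_mul]
    ring
  have c1 := count (fun x : ZMod (2*t) => z (x-1) > z x ∧ z (x+1) > z x) inferInstance
  have c2 := count (fun x : ZMod (2*t) => z (x-1) < z x ∧ z (x+1) < z x) inferInstance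
  have mm : ((Finset.univ.filter (fun x : ZMod (2*t) =>
        z (x - 1) < z x ∧ z (x + 1) < z x)).card : ℤ)
      = ((Finset.univ.filter (fun x : ZMod (2*t) =>
        z (x - 1) > z x ∧ z (x + 1) > z x)).card : ℤ) := by exact_mod_cast maxmin
  rw [sq_part, Finset.sum_add_distrib]
  rw [tel] at tel3
  linarith [tel3, c1, c2, mm]

end MinimaAux

theorem minima_eq_cos_formula (t : ℕ) (ht : 2 ≤ t) (z : ZMod (2*t) → ℤ)
    (hstep : ∀ k : ZMod (2*t), |z (k + 1) - z k| = 1)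
    (hant : ∀ k : ZMod (2*t), z (k + (t : ZMod (2*t))) = (t : ℤ) - z k) :
    (minimaCount t z : ℝ) =
      (t : ℝ) - (1/2) * (∑ k ∈ Finset.range (2*t), (z (k : ZMod (2*t)) : ℝ)^2)
        + (1/(4*(t:ℝ))) * ∑ k ∈ Finset.range (2*t),
          (‖dft t (fun j => (z j : ℂ)) k‖)^2 * (Real.cos (Real.pi * k / t))^2 := by
  classical
  open MinimaAux Finset in
  haveI : NeZero (2*t) := ⟨by omega⟩
  have ht0 : 0 < t := by omega
  have htR : (t : ℝ) ≠ 0 := Nat.cast_ne_zero.2 ht0.ne'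
  set F : ZMod (2*t) → ℂ := fun j => ((z j : ℤ) : ℂ) with hF
  -- Step 1: rewrite each summand as normSq of (dft * cos)
  have step1 : ∀ k : ℕ, (‖dft t F k‖)^2 * (Real.cos (Real.pi * k / t))^2
      = Complex.normSq (dft t F k * ((Real.cos (Real.pi * k / t) : ℝ) : ℂ)) := by
    intro k
    rw [Complex.normSq_mul, ← Complex.sq_norm, Complex.normSq_ofReal]
    ring
  -- Step 2: shift + parseval
  have hcn : ∀ m : ℕ, (2*t) ∣ m → om t ^ m = 1 := fun m hm =>
    (om_pow_eq_one_iff t ht0 m).2 hm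
  have step2 : ∑ k ∈ Finset.range (2*t),
      Complex.normSq (dft t F k * ((Real.cos (Real.pi * k / t) : ℝ) : ℂ))
      = (2*t : ℝ) * ∑ j ∈ Finset.range (2*t),
          Complex.normSq ((F ((j : ZMod (2*t)) - 1) + F ((j : ZMod (2*t)) + 1)) / 2) := by
    have := parseval_aux (2*t) (om t) (omb t) (om_mul_omb t) (conj_om t)
      (fun m => om_pow_eq_one_iff t ht0 m)
      (fun j => (F ((j : ZMod (2*t)) - 1) + F ((j : ZMod (2*t)) + 1)) / 2)
    rw [Finset.sum_congr rfl fun k _ => by rw [shift t ht hcn F k]]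
    exact_mod_cast this
  -- Step 3: normSq of the real average
  have step3 : ∀ j : ℕ, Complex.normSq ((F ((j : ZMod (2*t)) - 1) + F ((j : ZMod (2*t)) + 1)) / 2)
      = ((((z ((j : ZMod (2*t)) - 1) : ℝ) + (z ((j : ZMod (2*t)) + 1) : ℝ)) / 2))^2 := by
    intro j
    have : (F ((j : ZMod (2*t)) - 1) + F ((j : ZMod (2*t)) + 1)) / 2
        = ((((z ((j : ZMod (2*t)) - 1) : ℝ) + (z ((j : ZMod (2*t)) + 1) : ℝ)) / 2 : ℝ) : ℂ) := by
      rw [hF]; push_cast; ring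
    rw [this, Complex.normSq_ofReal]
    ring
  -- real sums over ZMod
  have hSz : (∑ k ∈ Finset.range (2*t), (z (k : ZMod (2*t)) : ℝ)^2)
      = ∑ x : ZMod (2*t), (z x : ℝ)^2 := sum_range_eq_sum_zmod (fun x : ZMod (2*t) => (z x : ℝ)^2)
  have hSw : (∑ j ∈ Finset.range (2*t),
        ((((z ((j : ZMod (2*t)) - 1) : ℝ) + (z ((j : ZMod (2*t)) + 1) : ℝ)) / 2))^2)
      = ∑ x : ZMod (2*t), (((z (x - 1) : ℝ) + (z (x + 1) : ℝ)) / 2)^2 :=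
    sum_range_eq_sum_zmod (fun x => (((z (x - 1) : ℝ) + (z (x + 1) : ℝ)) / 2)^2)
  -- the integer identity, cast to ℝ
  have hkey := key_int t z hstep hant
  set m : ℕ := (Finset.univ.filter (fun x : ZMod (2*t) =>
      z (x - 1) > z x ∧ z (x + 1) > z x)).card with hm
  have hkeyR : (∑ x : ZMod (2*t), (((z (x-1) : ℝ) + (z (x+1) : ℝ))^2 - 4 * (z x : ℝ)^2))
      = 8 * (m : ℝ) - 8 * t := by
    have := congrArg (fun w : ℤ => (w : ℝ)) hkey
    push_cast at this
    convert this using 2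
  -- minimaCount = m
  have hmc : minimaCount t z = m := by
    rw [minimaCount, hm]
    exact card_filter_range_eq (fun x : ZMod (2*t) => z (x - 1) > z x ∧ z (x + 1) > z x)
  -- assemble
  rw [hmc, Finset.sum_congr rfl fun k _ => step1 k, step2,
    Finset.sum_congr rfl fun j _ => step3 j, hSz, hSw]
  have hsplit : (∑ x : ZMod (2*t), (((z (x - 1) : ℝ) + (z (x + 1) : ℝ)) / 2)^2)
      = (∑ x : ZMod (2*t), (((z (x-1) : ℝ) + (z (x+1) : ℝ))^2 - 4 * (z x : ℝ)^2)) / 4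
        + ∑ x : ZMod (2*t), (z x : ℝ)^2 := by
    rw [Finset.sum_div, ← Finset.sum_add_distrib]
    refine Finset.sum_congr rfl fun x _ => ?_
    ring
  rw [hsplit, hkeyR]
  field_simp
  ring
end

section
/- Let z', z'' : ZMod (2t) → ℤ be two distance signals (consecutive steps ±1, antipodal relation z(k+t) = t - z(k)), with e = z'' - z' and m = z'' + z'. Then the total number of local minima of z' plus that of z'' equals 2t - (1/(4t))·∑_{k odd, 1 ≤ k ≤ t-1} (|ê(k)|² + |m̂(k)|²)·sin²(πk/t). -/
namespace MinAux

lemma sum_range_natCast {M : Type*} [AddCommMonoid M] (n : ℕ) [NeZero n] (f : ZMod n → M) :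
    ∑ j ∈ Finset.range n, f (j : ZMod n) = ∑ x : ZMod n, f x := by
  refine Finset.sum_nbij' (fun j => (j : ZMod n)) (fun x => x.val) ?_ ?_ ?_ ?_ ?_
  · intro a _; exact Finset.mem_univ _
  · intro x _; exact Finset.mem_range.2 (ZMod.val_lt x)
  · intro a ha; exact ZMod.val_cast_of_lt (Finset.mem_range.1 ha)
  · intro x _; exact ZMod.natCast_zmod_val x
  · intro a _; rfl

lemma sum_shift {M : Type*} [AddCommMonoid M] {n : ℕ} [NeZero n] (c : ZMod n) (f : ZMod n → M) :
    ∑ x : ZMod n, f (x + c) = ∑ x : ZMod n, f x :=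
  Fintype.sum_equiv (Equiv.addRight c) _ _ (fun _ => rfl)

noncomputable def om (t : ℕ) : ℂ := Complex.exp (-(Real.pi:ℂ) * Complex.I / t)

lemma om_pow (t k j : ℕ) :
    Complex.exp (-(Real.pi : ℂ) * Complex.I * k * j / t) = om t ^ (k * j) := by
  rw [om, ← Complex.exp_nat_mul]; congr 1; push_cast; ring

lemma om_ne_zero (t : ℕ) : om t ≠ 0 := Complex.exp_ne_zero _

lemma om_pow_n (t : ℕ) (ht : 0 < t) : om t ^ (2 * t) = 1 := by
  rw [om, ← Complex.exp_nat_mul]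
  have h : ((2 * t : ℕ) : ℂ) * (-(Real.pi:ℂ) * Complex.I / t) = (-1 : ℤ) * (2 * (Real.pi:ℂ) * Complex.I) := by
    have ht' : (t : ℂ) ≠ 0 := by exact_mod_cast ht.ne'
    field_simp
    push_cast
    ring
  rw [h, Complex.exp_int_mul_two_pi_mul_I]

lemma om_pow_ne_one (t : ℕ) (ht : 0 < t) {m : ℕ} (hm : 0 < m) (hm2 : m < 2 * t) :
    om t ^ m ≠ 1 := by
  rw [om, ← Complex.exp_nat_mul]
  intro h
  obtain ⟨n, hn⟩ := Complex.exp_eq_one_iff.1 h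
  have ht' : (t : ℂ) ≠ 0 := by exact_mod_cast ht.ne'
  have hπ : (Real.pi : ℂ) ≠ 0 := by exact_mod_cast Real.pi_ne_zero
  have hI := Complex.I_ne_zero
  have hπI : (Real.pi : ℂ) * Complex.I ≠ 0 := mul_ne_zero hπ hI
  have key : (m : ℂ) = ((-2 * n * t : ℤ) : ℂ) := by
    field_simp at hn
    refine mul_right_cancel₀ hπI ?_
    push_cast
    linear_combination (-(Real.pi:ℂ)*Complex.I) * hn
  have : (m : ℤ) = -2 * n * t := by exact_mod_cast key
  have hmz : (0 : ℤ) < m := by exact_mod_cast hm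
  have hmz2 : (m : ℤ) < 2 * t := by exact_mod_cast hm2
  have htz : (0 : ℤ) < t := by exact_mod_cast ht
  have hn0 : n < 0 := by nlinarith
  have hn1 : n ≤ -1 := by omega
  nlinarith [mul_le_mul_of_nonneg_right hn1 htz.le]

noncomputable def psi (t k : ℕ) (x : ZMod (2*t)) : ℂ := om t ^ (k * x.val)

lemma pow_val_mod {ζ : ℂ} {n : ℕ} (hζ : ζ ^ n = 1) (a : ℕ) : ζ ^ (a % n) = ζ ^ a := by
  conv_rhs => rw [← Nat.div_add_mod a n]
  rw [pow_add, pow_mul, hζ, one_pow, one_mul]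

lemma psi_pow_eq (t k : ℕ) (ht : 0 < t) (a : ℕ) :
    om t ^ (k * (a % (2*t))) = om t ^ (k * a) := by
  rw [mul_comm k, pow_mul, mul_comm k, pow_mul]
  congr 1
  exact pow_val_mod (om_pow_n t ht) a

lemma psi_add (t k : ℕ) (ht : 0 < t) (x y : ZMod (2*t)) :
    psi t k (x + y) = psi t k x * psi t k y := by
  haveI : NeZero (2*t) := ⟨by omega⟩
  unfold psi
  rw [ZMod.val_add, psi_pow_eq t k ht, mul_add, pow_add]

lemma psi_one (t k : ℕ) (ht : 0 < t) : psi t k 1 = om t ^ k := by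
  haveI : Fact (1 < 2*t) := ⟨by omega⟩
  unfold psi
  rw [ZMod.val_one, mul_one]

lemma psi_ne_zero (t k : ℕ) (x : ZMod (2*t)) : psi t k x ≠ 0 :=
  pow_ne_zero _ (om_ne_zero t)

lemma dft_eq (t : ℕ) [NeZero (2*t)] (ht : 0 < t) (f : ZMod (2*t) → ℂ) (k : ℕ) :
    dft t f k = ∑ x : ZMod (2*t), f x * psi t k x := by
  rw [dft, ← sum_range_natCast (2*t) (fun x => f x * psi t k x)]
  refine Finset.sum_congr rfl (fun j hj => ?_)
  rw [om_pow, psi, ZMod.val_natCast, psi_pow_eq t k ht]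

end MinAux

namespace MinAux

lemma ghat_eq (t : ℕ) [NeZero (2*t)] (ht : 0 < t) (z : ZMod (2*t) → ℂ) (k : ℕ) :
    (∑ x : ZMod (2*t), (z (x+1) - z (x-1)) * psi t k x) * om t ^ k
      = (∑ x : ZMod (2*t), z x * psi t k x) * (1 - (om t ^ k)^2) := by
  have ha : ∀ x : ZMod (2*t), psi t k (x + 1) = psi t k x * om t ^ k := fun x => by
    rw [psi_add t k ht, psi_one t k ht]
  have h1 : ∑ x : ZMod (2*t), z (x+1) * psi t k (x+1) = ∑ x : ZMod (2*t), z x * psi t k x :=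
    sum_shift 1 (fun y => z y * psi t k y)
  have h2 : ∑ x : ZMod (2*t), z (x + (-1)) * psi t k (x + (-1))
      = ∑ x : ZMod (2*t), z x * psi t k x :=
    sum_shift (-1) (fun y => z y * psi t k y)
  have step : (∑ x : ZMod (2*t), (z (x+1) - z (x-1)) * psi t k x) * om t ^ k
      = ∑ x : ZMod (2*t), (z (x+1) * psi t k (x+1)
          - (z (x + (-1)) * psi t k (x + (-1))) * (om t ^ k)^2) := by
    rw [Finset.sum_mul]
    refine Finset.sum_congr rfl (fun x _ => ?_)
    have e1 : psi t k (x+1) = psi t k x * om t ^ k := ha x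
    have e2 : psi t k x = psi t k (x-1) * om t ^ k := by
      have h := ha (x-1); rw [sub_add_cancel] at h; exact h
    have hx : x - 1 = x + (-1) := by ring
    rw [e1, e2, ← hx]
    ring
  rw [step, Finset.sum_sub_distrib]
  rw [← Finset.sum_mul, h2, h1]
  ring

lemma abs_one_sub_sq (t k : ℕ) (ht : 0 < t) :
    ‖1 - (om t ^ k)^2‖ = 2 * |Real.sin (Real.pi * k / t)| := by
  have ha : om t ^ k = Complex.exp (-((Real.pi * k / t : ℝ) : ℂ) * Complex.I) := by
    rw [om, ← Complex.exp_nat_mul]; congr 1; push_cast; ring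
  set θ : ℝ := Real.pi * k / t with hθ
  have hsq : Complex.exp (-(θ:ℂ)*Complex.I) ^ 2
      = Complex.exp (-(θ:ℂ)*Complex.I) * Complex.exp (-(θ:ℂ)*Complex.I) := sq _
  have h1 : 1 - (om t ^ k)^2
      = om t ^ k * (Complex.exp ((θ:ℂ) * Complex.I) - Complex.exp (-(θ:ℂ) * Complex.I)) := by
    rw [ha, mul_sub, ← Complex.exp_add, ← Complex.exp_add,
      show -(θ:ℂ)*Complex.I + (θ:ℂ)*Complex.I = 0 by ring, Complex.exp_zero, hsq,
      ← Complex.exp_add]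
  have h2 : Complex.exp ((θ:ℂ) * Complex.I) - Complex.exp (-(θ:ℂ) * Complex.I)
      = 2 * (Real.sin θ : ℂ) * Complex.I := by
    rw [Complex.exp_mul_I, Complex.exp_mul_I, Complex.cos_neg, Complex.sin_neg,
      ← Complex.ofReal_sin]
    ring
  rw [h1, h2, norm_mul]
  have habs : ‖om t ^ k‖ = 1 := by
    rw [ha, Complex.norm_exp]; simp
  rw [habs, one_mul, norm_mul, norm_mul, Complex.norm_two, Complex.norm_real, Real.norm_eq_abs,
    Complex.norm_I, mul_one]

lemma abs_om_pow (t k : ℕ) : ‖om t ^ k‖ = 1 := by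
  rw [norm_pow, om, Complex.norm_exp]
  simp

lemma ghat_abs_sq (t : ℕ) [NeZero (2*t)] (ht : 0 < t) (z : ZMod (2*t) → ℂ) (k : ℕ) :
    (‖∑ x : ZMod (2*t), (z (x+1) - z (x-1)) * psi t k x‖) ^ 2
      = 4 * (Real.sin (Real.pi * k / t))^2
        * (‖∑ x : ZMod (2*t), z x * psi t k x‖) ^ 2 := by
  have h := congrArg norm (ghat_eq t ht z k)
  rw [norm_mul, norm_mul, abs_om_pow, mul_one, abs_one_sub_sq t k ht] at h
  have := congrArg (fun r : ℝ => r^2) h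
  simp only [mul_pow] at this
  rw [this, _root_.sq_abs (Real.sin (Real.pi * k / t))]
  ring

end MinAux

namespace MinAux

lemma conj_om (t : ℕ) : (starRingEnd ℂ) (om t) = (om t)⁻¹ := by
  rw [om, ← Complex.exp_conj, ← Complex.exp_neg]
  congr 1
  simp [map_div₀, Complex.conj_I]
  ring

lemma conj_psi (t k : ℕ) (x : ZMod (2*t)) :
    (starRingEnd ℂ) (psi t k x) = ((om t ^ x.val)⁻¹) ^ k := by
  rw [psi, map_pow, conj_om, mul_comm, pow_mul, inv_pow]

lemma psi_pow_k (t k : ℕ) (x : ZMod (2*t)) : psi t k x = (om t ^ x.val) ^ k := by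
  rw [psi, mul_comm, pow_mul]

lemma orth (t : ℕ) [NeZero (2*t)] (ht : 0 < t) (x y : ZMod (2*t)) :
    ∑ k ∈ Finset.range (2*t), psi t k x * (starRingEnd ℂ) (psi t k y)
      = if x = y then ((2*t : ℕ) : ℂ) else 0 := by
  have hterm : ∀ k, psi t k x * (starRingEnd ℂ) (psi t k y)
      = (om t ^ x.val * (om t ^ y.val)⁻¹) ^ k := fun k => by
    rw [psi_pow_k, conj_psi, mul_pow]
  simp only [hterm]
  set u : ℂ := om t ^ x.val * (om t ^ y.val)⁻¹ with hu
  by_cases hxy : x = y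
  · subst hxy
    have : u = 1 := mul_inv_cancel₀ (pow_ne_zero _ (om_ne_zero t))
    simp [this]
  · rw [if_neg hxy]
    have hne : u ≠ 1 := by
      intro h1
      have hpow : om t ^ x.val = om t ^ y.val := by
        have hy : (om t ^ y.val) ≠ 0 := pow_ne_zero _ (om_ne_zero t)
        field_simp [hu] at h1
        rw [hu] at h1
        exact (mul_inv_eq_one₀ hy).1 h1
      have hvne : x.val ≠ y.val := fun h => hxy (ZMod.val_injective _ h)
      rcases lt_or_gt_of_ne hvne with hlt | hgt
      · have : om t ^ x.val * om t ^ (y.val - x.val) = om t ^ x.val * 1 := by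
          rw [← pow_add, Nat.add_sub_cancel' hlt.le, mul_one, hpow]
        have h2 := mul_left_cancel₀ (pow_ne_zero x.val (om_ne_zero t)) this
        exact om_pow_ne_one t ht (by omega) (by have := ZMod.val_lt y; omega) h2
      · have : om t ^ y.val * om t ^ (x.val - y.val) = om t ^ y.val * 1 := by
          rw [← pow_add, Nat.add_sub_cancel' hgt.le, mul_one, hpow]
        have h2 := mul_left_cancel₀ (pow_ne_zero y.val (om_ne_zero t)) this
        exact om_pow_ne_one t ht (by omega) (by have := ZMod.val_lt x; omega) h2
    have hun : u ^ (2*t) = 1 := by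
      rw [hu, mul_pow, ← pow_mul, mul_comm x.val, pow_mul, om_pow_n t ht, one_pow,
        inv_pow, ← pow_mul, mul_comm y.val, pow_mul, om_pow_n t ht, one_pow, inv_one, mul_one]
    rw [geom_sum_eq hne, hun]
    simp

lemma parseval (t : ℕ) [NeZero (2*t)] (ht : 0 < t) (g : ZMod (2*t) → ℂ) :
    ∑ k ∈ Finset.range (2*t),
        (∑ x : ZMod (2*t), g x * psi t k x) * (starRingEnd ℂ) (∑ x : ZMod (2*t), g x * psi t k x)
      = ((2*t : ℕ) : ℂ) * ∑ x : ZMod (2*t), g x * (starRingEnd ℂ) (g x) := by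
  have expand : ∀ k, (∑ x : ZMod (2*t), g x * psi t k x)
        * (starRingEnd ℂ) (∑ x : ZMod (2*t), g x * psi t k x)
      = ∑ x : ZMod (2*t), ∑ y : ZMod (2*t),
          (g x * (starRingEnd ℂ) (g y)) * (psi t k x * (starRingEnd ℂ) (psi t k y)) := by
    intro k
    rw [map_sum, Finset.sum_mul_sum]
    refine Finset.sum_congr rfl (fun x _ => Finset.sum_congr rfl (fun y _ => ?_))
    rw [map_mul]
    ring
  simp only [expand]
  rw [Finset.sum_comm]
  have inner : ∀ x : ZMod (2*t),
      ∑ k ∈ Finset.range (2*t), ∑ y : ZMod (2*t),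
          (g x * (starRingEnd ℂ) (g y)) * (psi t k x * (starRingEnd ℂ) (psi t k y))
        = ((2*t : ℕ) : ℂ) * (g x * (starRingEnd ℂ) (g x)) := by
    intro x
    rw [Finset.sum_comm]
    have : ∀ y : ZMod (2*t),
        ∑ k ∈ Finset.range (2*t),
            (g x * (starRingEnd ℂ) (g y)) * (psi t k x * (starRingEnd ℂ) (psi t k y))
          = (g x * (starRingEnd ℂ) (g y)) * (if x = y then ((2*t : ℕ) : ℂ) else 0) := by
      intro y
      rw [← Finset.mul_sum, orth t ht x y]
    simp only [this, mul_ite, mul_zero]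
    rw [Finset.sum_ite_eq]
    simp [mul_comm]
  simp only [inner]
  rw [← Finset.mul_sum]

end MinAux

namespace MinAux

lemma psi_t_even (t : ℕ) [NeZero (2*t)] (ht : 0 < t) {k : ℕ} (hk : Even k) (x : ZMod (2*t)) :
    psi t k (x + (t : ZMod (2*t))) = psi t k x := by
  rw [psi_add t k ht]
  have hval : ((t : ZMod (2*t))).val = t := by
    rw [ZMod.val_natCast, Nat.mod_eq_of_lt (by omega)]
  obtain ⟨m, hm⟩ := hk
  have : psi t k (t : ZMod (2*t)) = 1 := by
    rw [psi, hval, hm, show (m + m) * t = (2*t) * m by ring, pow_mul, om_pow_n t ht, one_pow]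
  rw [this, mul_one]

lemma hat_even_zero (t : ℕ) [NeZero (2*t)] (ht : 0 < t) (f : ZMod (2*t) → ℂ)
    (hf : ∀ x, f (x + (t : ZMod (2*t))) = -f x) {k : ℕ} (hk : Even k) :
    ∑ x : ZMod (2*t), f x * psi t k x = 0 := by
  have h1 : ∑ x : ZMod (2*t), f x * psi t k x
      = ∑ x : ZMod (2*t), f (x + (t : ZMod (2*t))) * psi t k (x + (t : ZMod (2*t))) :=
    (sum_shift (t : ZMod (2*t)) (fun y => f y * psi t k y)).symm
  have h2 : ∑ x : ZMod (2*t), f (x + (t : ZMod (2*t))) * psi t k (x + (t : ZMod (2*t)))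
      = -∑ x : ZMod (2*t), f x * psi t k x := by
    rw [← Finset.sum_neg_distrib]
    refine Finset.sum_congr rfl (fun x _ => ?_)
    rw [hf x, psi_t_even t ht hk x]
    ring
  have := h1.trans h2
  exact CharZero.eq_neg_self_iff.1 this

lemma psi_reflect (t : ℕ) [NeZero (2*t)] (ht : 0 < t) {k : ℕ} (hk : k ≤ 2*t) (x : ZMod (2*t)) :
    psi t (2*t - k) x = (starRingEnd ℂ) (psi t k x) := by
  rw [conj_psi, psi]
  have h1 : om t ^ ((2*t - k) * x.val) * om t ^ (k * x.val) = 1 := by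
    rw [← pow_add, show (2*t - k) * x.val + k * x.val = (2*t) * x.val by
      rw [← add_mul, Nat.sub_add_cancel hk], pow_mul, om_pow_n t ht, one_pow]
  have h2 : ((om t ^ x.val)⁻¹) ^ k * om t ^ (k * x.val) = 1 := by
    rw [inv_pow, ← pow_mul, mul_comm x.val k]
    exact inv_mul_cancel₀ (pow_ne_zero _ (om_ne_zero t))
  have e1 := eq_inv_of_mul_eq_one_left h1
  have e2 := eq_inv_of_mul_eq_one_left h2
  rw [e1, ← e2]

lemma hat_reflect (t : ℕ) [NeZero (2*t)] (ht : 0 < t) (f : ZMod (2*t) → ℂ)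
    (hf : ∀ x, (starRingEnd ℂ) (f x) = f x) {k : ℕ} (hk : k ≤ 2*t) :
    ∑ x : ZMod (2*t), f x * psi t (2*t - k) x
      = (starRingEnd ℂ) (∑ x : ZMod (2*t), f x * psi t k x) := by
  rw [map_sum]
  refine Finset.sum_congr rfl (fun x _ => ?_)
  rw [map_mul, hf x, psi_reflect t ht hk x]

lemma pairing (t : ℕ) (h : ℕ → ℝ) (heven : ∀ k, Even k → h k = 0) (hT : h t = 0)
    (hrefl : ∀ k, 1 ≤ k → k ≤ 2*t → h (2*t - k) = h k) :
    ∑ k ∈ Finset.range (2*t), h k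
      = 2 * ∑ k ∈ (Finset.range t).filter (fun k => Odd k), h k := by
  have hsplit : ∑ k ∈ Finset.range (2*t), h k
      = (∑ k ∈ Finset.range t, h k) + ∑ i ∈ Finset.range t, h (t + i) := by
    rw [show 2*t = t + t by ring, Finset.sum_range_add]
  have hstep1 : ∀ i ∈ Finset.range t, h (t + i) = h (t - i) := by
    intro i hi
    rcases Nat.eq_zero_or_pos i with h0 | hpos
    · simp [h0]
    · have him := Finset.mem_range.1 hi
      have := hrefl (t - i) (by omega) (by omega)
      rw [show 2*t - (t - i) = t + i by omega] at this
      exact this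
  have hstep2 : ∑ i ∈ Finset.range t, h (t - i) = ∑ i ∈ Finset.range t, h (i + 1) := by
    rw [← Finset.sum_range_reflect (fun i => h (t - i)) t]
    refine Finset.sum_congr rfl (fun i hi => ?_)
    have him := Finset.mem_range.1 hi
    congr 1
    omega
  have hstep3 : ∑ i ∈ Finset.range t, h (i + 1)
      = (∑ i ∈ Finset.range t, h i) + h t - h 0 := by
    have := Finset.sum_range_succ' h t
    have h2 := Finset.sum_range_succ h t
    -- sum_range_succ' : ∑ i in range (n+1), f i = (∑ i in range n, f (i+1)) + f 0
    rw [h2] at this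
    linarith
  have hfilter : ∑ k ∈ Finset.range t, h k
      = ∑ k ∈ (Finset.range t).filter (fun k => Odd k), h k := by
    refine (Finset.sum_filter_of_ne (fun x _ hx => ?_)).symm
    by_contra hodd
    exact hx (heven x (Nat.not_odd_iff_even.1 hodd))
  rw [hsplit, Finset.sum_congr rfl hstep1, hstep2, hstep3, heven 0 ⟨0, rfl⟩, hT, hfilter]
  ring

end MinAux

namespace MinAux

lemma count_eq (t : ℕ) [NeZero (2*t)] (ht : 0 < t) (z : ZMod (2*t) → ℤ)
    (hstep : ∀ k : ZMod (2*t), |z (k + 1) - z k| = 1) :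
    4 * (minimaCount t z : ℤ)
      = 2*t - ∑ x : ZMod (2*t), (z (x+1) - z x) * (z x - z (x-1)) := by
  have hcard : (minimaCount t z : ℤ)
      = ∑ x : ZMod (2*t), (if z (x - 1) > z x ∧ z (x + 1) > z x then (1:ℤ) else 0) := by
    rw [minimaCount, Finset.card_filter]
    push_cast
    exact sum_range_natCast (2*t) (fun x => if z (x - 1) > z x ∧ z (x + 1) > z x then (1:ℤ) else 0)
  have hpoint : ∀ x : ZMod (2*t),
      4 * (if z (x - 1) > z x ∧ z (x + 1) > z x then (1:ℤ) else 0)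
        = (1 - (z x - z (x-1))) * (1 + (z (x+1) - z x)) := by
    intro x
    have h1 : z (x+1) - z x = 1 ∨ z (x+1) - z x = -1 :=
      (abs_eq (by norm_num)).1 (hstep x)
    have h2' := hstep (x-1)
    rw [sub_add_cancel] at h2'
    have h2 : z x - z (x-1) = 1 ∨ z x - z (x-1) = -1 := (abs_eq (by norm_num)).1 h2'
    rcases h1 with h1 | h1 <;> rcases h2 with h2 | h2
    · rw [if_neg (by intro hc; omega)]; rw [h1, h2]; ring
    · rw [if_pos ⟨by omega, by omega⟩]; rw [h1, h2]; ring
    · rw [if_neg (by intro hc; omega)]; rw [h1, h2]; ring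
    · rw [if_neg (by intro hc; omega)]; rw [h1, h2]; ring
  have hshift : ∑ x : ZMod (2*t), (z x - z (x-1)) = ∑ x : ZMod (2*t), (z (x+1) - z x) := by
    have := sum_shift (-1 : ZMod (2*t)) (fun y => z (y+1) - z y)
    rw [← this]
    refine Finset.sum_congr rfl (fun x _ => ?_)
    rw [show x + -1 = x - 1 by ring, sub_add_cancel]
  have hone : ∑ _x : ZMod (2*t), (1:ℤ) = 2*t := by
    rw [Finset.sum_const, Finset.card_univ, ZMod.card]
    simp
  calc 4 * (minimaCount t z : ℤ)
      = ∑ x : ZMod (2*t), 4 * (if z (x - 1) > z x ∧ z (x + 1) > z x then (1:ℤ) else 0) := by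
        rw [hcard, Finset.mul_sum]
    _ = ∑ x : ZMod (2*t), (1 - (z x - z (x-1))) * (1 + (z (x+1) - z x)) :=
        Finset.sum_congr rfl (fun x _ => hpoint x)
    _ = ∑ x : ZMod (2*t), ((1:ℤ) + (z (x+1) - z x) - (z x - z (x-1))
          - (z (x+1) - z x) * (z x - z (x-1))) :=
        Finset.sum_congr rfl (fun x _ => by ring)
    _ = 2*t - ∑ x : ZMod (2*t), (z (x+1) - z x) * (z x - z (x-1)) := by
        rw [Finset.sum_sub_distrib, Finset.sum_sub_distrib, Finset.sum_add_distrib,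
          hone, hshift]
        ring

lemma sumsq_eq (t : ℕ) [NeZero (2*t)] (ht : 0 < t) (z : ZMod (2*t) → ℤ)
    (hstep : ∀ k : ZMod (2*t), |z (k + 1) - z k| = 1) :
    ∑ x : ZMod (2*t), (z (x+1) - z (x-1))^2
      = 4*t + 2 * ∑ x : ZMod (2*t), (z (x+1) - z x) * (z x - z (x-1)) := by
  have hone : ∑ _x : ZMod (2*t), (1:ℤ) = 2*t := by
    rw [Finset.sum_const, Finset.card_univ, ZMod.card]
    simp
  have hpoint : ∀ x : ZMod (2*t), (z (x+1) - z (x-1))^2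
      = 2 + 2 * ((z (x+1) - z x) * (z x - z (x-1))) := by
    intro x
    have h1 : (z (x+1) - z x)^2 = 1 := by
      have := hstep x
      rcases (abs_eq (by norm_num : (0:ℤ) ≤ 1)).1 this with h | h <;> rw [h] <;> ring
    have h2' := hstep (x-1)
    rw [sub_add_cancel] at h2'
    have h2 : (z x - z (x-1))^2 = 1 := by
      rcases (abs_eq (by norm_num : (0:ℤ) ≤ 1)).1 h2' with h | h <;> rw [h] <;> ring
    linear_combination h1 + h2
  calc ∑ x : ZMod (2*t), (z (x+1) - z (x-1))^2
      = ∑ x : ZMod (2*t), ((2:ℤ) + 2 * ((z (x+1) - z x) * (z x - z (x-1)))) :=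
        Finset.sum_congr rfl (fun x _ => hpoint x)
    _ = 4*t + 2 * ∑ x : ZMod (2*t), (z (x+1) - z x) * (z x - z (x-1)) := by
        rw [Finset.sum_add_distrib, ← Finset.mul_sum]
        have : ∑ _x : ZMod (2*t), (2:ℤ) = 2*(2*t) := by
          rw [Finset.sum_const, Finset.card_univ, ZMod.card]; push_cast; ring
        rw [this]; ring

end MinAux

namespace MinAux

lemma single (t : ℕ) (ht2 : 2 ≤ t) (z : ZMod (2*t) → ℤ)
    (hstep : ∀ k : ZMod (2*t), |z (k + 1) - z k| = 1)
    (hant : ∀ k : ZMod (2*t), z (k + (t : ZMod (2*t))) = (t : ℤ) - z k) :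
    (minimaCount t z : ℝ)
      = t - (1/(2*(t:ℝ))) * ∑ k ∈ (Finset.range t).filter (fun k => Odd k),
          ‖dft t (fun j => (z j : ℂ)) k‖^2 * (Real.sin (Real.pi * k / t))^2 := by
  have ht : 0 < t := by omega
  haveI : NeZero (2*t) := ⟨by omega⟩
  set Z : ZMod (2*t) → ℂ := fun j => (z j : ℂ) with hZ
  set G : ZMod (2*t) → ℂ := fun x => Z (x+1) - Z (x-1) with hG
  set Gh : ℕ → ℂ := fun k => ∑ x : ZMod (2*t), G x * psi t k x with hGh
  set h : ℕ → ℝ := fun k => ‖Gh k‖^2 with hh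
  -- (i) h k = 4 sin² |dft Z k|²
  have hi : ∀ k : ℕ, h k = 4 * (Real.sin (Real.pi * k / t))^2
      * ‖dft t Z k‖^2 := by
    intro k
    have := ghat_abs_sq t ht Z k
    rw [hh, hGh, dft_eq t ht Z k]
    exact this
  -- (ii) even vanish
  have hGant : ∀ x : ZMod (2*t), G (x + (t : ZMod (2*t))) = -G x := by
    intro x
    have e1 : x + (t : ZMod (2*t)) + 1 = (x + 1) + (t : ZMod (2*t)) := by ring
    have e2 : x + (t : ZMod (2*t)) - 1 = (x - 1) + (t : ZMod (2*t)) := by ring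
    rw [hG]
    simp only [e1, e2, hZ, hant (x+1), hant (x-1)]
    push_cast
    ring
  have heven : ∀ k, Even k → h k = 0 := by
    intro k hk
    rw [hh, hGh]
    simp only [hat_even_zero t ht G hGant hk]
    simp
  -- (iii) h t = 0
  have hT : h t = 0 := by
    rw [hi t]
    have : Real.pi * t / t = Real.pi := by
      field_simp
    rw [this, Real.sin_pi]
    ring
  -- (iv) reflection
  have hGreal : ∀ x, (starRingEnd ℂ) (G x) = G x := by
    intro x
    rw [hG]
    simp only [hZ, map_sub]
    rw [map_intCast, map_intCast]
  have hrefl : ∀ k, 1 ≤ k → k ≤ 2*t → h (2*t - k) = h k := by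
    intro k _ hk2
    rw [hh, hGh]
    simp only
    rw [hat_reflect t ht G hGreal hk2, Complex.norm_conj]
  -- pairing
  have hpair := pairing t h heven hT hrefl
  -- Parseval
  have hQ : ∑ k ∈ Finset.range (2*t), h k
      = (2*(t:ℝ)) * ∑ x : ZMod (2*t), ((z (x+1) - z (x-1) : ℤ) : ℝ)^2 := by
    have hp := parseval t ht G
    have hL : ∀ k, Gh k * (starRingEnd ℂ) (Gh k) = ((h k : ℝ) : ℂ) := by
      intro k
      rw [Complex.mul_conj, hh]
      simp [Complex.sq_norm]
    have hR : ∀ x : ZMod (2*t), G x * (starRingEnd ℂ) (G x)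
        = ((((z (x+1) - z (x-1) : ℤ) : ℝ))^2 : ℝ) := by
      intro x
      rw [Complex.mul_conj, hG]
      simp only [hZ]
      rw [show ((z (x+1) : ℂ) - (z (x-1) : ℂ)) = (((z (x+1) - z (x-1) : ℤ) : ℝ) : ℂ) by push_cast; ring]
      rw [Complex.normSq_ofReal]
      push_cast
      ring
    rw [hGh] at hL
    simp only [hL, hR] at hp
    have hcast : ((∑ k ∈ Finset.range (2*t), h k : ℝ) : ℂ)
        = (((2*(t:ℝ)) * ∑ x : ZMod (2*t), ((z (x+1) - z (x-1) : ℤ) : ℝ)^2 : ℝ) : ℂ) := by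
      push_cast
      rw [hp]
      push_cast
      ring
    exact_mod_cast hcast
  -- integer identities
  have hcnt := count_eq t ht z hstep
  have hsq := sumsq_eq t ht z hstep
  set C : ℤ := ∑ x : ZMod (2*t), (z (x+1) - z x) * (z x - z (x-1)) with hC
  -- cast to ℝ
  have hcntR : 4 * (minimaCount t z : ℝ) = 2*(t:ℝ) - (C : ℝ) := by exact_mod_cast hcnt
  have hsqR : ∑ x : ZMod (2*t), ((z (x+1) - z (x-1) : ℤ) : ℝ)^2 = 4*(t:ℝ) + 2*(C:ℝ) := by
    exact_mod_cast hsq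
  -- combine
  set S : ℝ := ∑ k ∈ (Finset.range t).filter (fun k => Odd k),
      ‖dft t Z k‖^2 * (Real.sin (Real.pi * k / t))^2 with hS
  have hfh : ∑ k ∈ (Finset.range t).filter (fun k => Odd k), h k = 4 * S := by
    rw [hS, Finset.mul_sum]
    refine Finset.sum_congr rfl (fun k _ => ?_)
    rw [hi k]
    ring
  have htR : (0:ℝ) < t := by exact_mod_cast ht
  have key : 8 * S = 2*(t:ℝ) * (4*(t:ℝ) + 2*(C:ℝ)) := by
    rw [← hsqR, ← hQ, hpair, hfh]
    ring
  rw [hS] at key ⊢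
  rw [hZ] at key ⊢
  field_simp at key ⊢
  nlinarith [hcntR, key]

end MinAux

namespace MinAux

lemma dft_sub (t : ℕ) (f g : ZMod (2*t) → ℂ) (k : ℕ) :
    dft t (fun j => f j - g j) k = dft t f k - dft t g k := by
  rw [dft, dft, dft, ← Finset.sum_sub_distrib]
  exact Finset.sum_congr rfl (fun j _ => by ring)

lemma dft_add (t : ℕ) (f g : ZMod (2*t) → ℂ) (k : ℕ) :
    dft t (fun j => f j + g j) k = dft t f k + dft t g k := by
  rw [dft, dft, dft, ← Finset.sum_add_distrib]
  exact Finset.sum_congr rfl (fun j _ => by ring)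

lemma dft_congr (t : ℕ) (f g : ZMod (2*t) → ℂ) (hfg : ∀ j, f j = g j) (k : ℕ) :
    dft t f k = dft t g k := by
  rw [dft, dft]
  exact Finset.sum_congr rfl (fun j _ => by rw [hfg])

lemma parallelogram (a b : ℂ) :
    ‖b - a‖^2 + ‖b + a‖^2
      = 2 * (‖a‖^2 + ‖b‖^2) := by
  simp only [Complex.sq_norm, Complex.normSq_sub, Complex.normSq_add]
  ring

end MinAux

theorem minima_sum_two_cycles (t : ℕ) (ht : 2 ≤ t) (z' z'' : ZMod (2*t) → ℤ)
    (hstep' : ∀ k : ZMod (2*t), |z' (k + 1) - z' k| = 1)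
    (hstep'' : ∀ k : ZMod (2*t), |z'' (k + 1) - z'' k| = 1)
    (hant' : ∀ k : ZMod (2*t), z' (k + (t : ZMod (2*t))) = (t : ℤ) - z' k)
    (hant'' : ∀ k : ZMod (2*t), z'' (k + (t : ZMod (2*t))) = (t : ℤ) - z'' k)
    (e m : ZMod (2*t) → ℂ)
    (he : ∀ j, e j = (z'' j : ℂ) - (z' j : ℂ))
    (hm : ∀ j, m j = (z'' j : ℂ) + (z' j : ℂ)) :
    (minimaCount t z' : ℝ) + (minimaCount t z'' : ℝ) =
      2*(t : ℝ) - (1/(4*(t:ℝ))) * ∑ k ∈ (Finset.range t).filter (fun k => Odd k),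
        (‖dft t e k‖^2 + ‖dft t m k‖^2) *
          (Real.sin (Real.pi * k / t))^2 := by
  have h1 := MinAux.single t ht z' hstep' hant'
  have h2 := MinAux.single t ht z'' hstep'' hant''
  have hsum : ∑ k ∈ (Finset.range t).filter (fun k => Odd k),
        (‖dft t e k‖^2 + ‖dft t m k‖^2) *
          (Real.sin (Real.pi * k / t))^2
      = 2 * ((∑ k ∈ (Finset.range t).filter (fun k => Odd k),
            ‖dft t (fun j => ((z' j : ℂ))) k‖^2 * (Real.sin (Real.pi * k / t))^2)
          + ∑ k ∈ (Finset.range t).filter (fun k => Odd k),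
            ‖dft t (fun j => ((z'' j : ℂ))) k‖^2 * (Real.sin (Real.pi * k / t))^2) := by
    rw [← Finset.sum_add_distrib, Finset.mul_sum]
    refine Finset.sum_congr rfl (fun k _ => ?_)
    have hek : dft t e k = dft t (fun j => ((z'' j : ℂ))) k - dft t (fun j => ((z' j : ℂ))) k := by
      rw [← MinAux.dft_sub]
      exact MinAux.dft_congr t _ _ he k
    have hmk : dft t m k = dft t (fun j => ((z'' j : ℂ))) k + dft t (fun j => ((z' j : ℂ))) k := by
      rw [← MinAux.dft_add]
      exact MinAux.dft_congr t _ _ hm k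
    rw [hek, hmk, MinAux.parallelogram]
    ring
  rw [hsum, h1, h2]
  have h0 : 0 < t := by omega
  have htR : (t:ℝ) ≠ 0 := by
    have : (0:ℝ) < t := by exact_mod_cast h0
    exact this.ne'
  field_simp
  ring
end
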